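/- arXiv:2601.19828 — 7 statements merged into one kernel-verified Lean document; each statement's English description precedes it below -/
import Mathlib

section
/- Let H be a real Hilbert space with inner product ⟨·,·⟩ and norm ‖·‖, let q ∈ ℕ, and let a < b with τ = b − a, λ = 1/(2τ), and φ(t) = 1 − λ(t − a). Then for every H-valued polynomial v of degree at most q and every v⁻ ∈ H, ∫_a^b ⟨v'(t), φ(t) v(t)⟩ dt + ⟨v(a) − v⁻, v(a)⟩ = (1/4)‖v(b)‖² + (1/2)‖v(a) − v⁻‖² − (1/2)‖v⁻‖² + (λ/2) ∫_a^b ‖v(t)‖² dt. -/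
open MeasureTheory Set RealInnerProductSpace

/-- An `H`-valued polynomial of degree at most `q`:
`t ↦ ∑_{i=0}^{q} t^i • c i` with coefficients `c i ∈ H`. -/
def IsPolyDegLE (H : Type*) [AddCommGroup H] [Module ℝ H] (q : ℕ) (f : ℝ → H) : Prop :=
  ∃ c : Fin (q + 1) → H, ∀ t : ℝ, f t = ∑ i : Fin (q + 1), t ^ (i : ℕ) • c i

/-- Identity involving the auxiliary weight function `φ(t) = 1 - λ (t - a)` with `λ = 1/(2τ)`,
including the jump term at `a`, where `v⁻` plays the role of the left trace `v(a⁻)`: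
for every `H`-valued polynomial `v` of degree at most `q` and every `v⁻ ∈ H`,
`∫_a^b ⟨v', φ v⟩ dt + ⟨v(a) - v⁻, v(a)⟩
  = (1/4)‖v(b)‖² + (1/2)‖v(a) - v⁻‖² - (1/2)‖v⁻‖² + (λ/2) ∫_a^b ‖v‖² dt`. -/
theorem identity_varphi_jump (H : Type*) [NormedAddCommGroup H] [InnerProductSpace ℝ H]
    [CompleteSpace H] (q : ℕ) (a b τ lam : ℝ) (hab : a < b) (hτ : τ = b - a)
    (hlam : lam = 1 / (2 * τ)) (φ : ℝ → ℝ) (hφ : ∀ t, φ t = 1 - lam * (t - a))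
    (v : ℝ → H) (hv : IsPolyDegLE H q v) (vminus : H) :
    (∫ t in a..b, ⟪deriv v t, φ t • v t⟫) + ⟪v a - vminus, v a⟫ =
      (1 / 4) * ‖v b‖ ^ 2 + (1 / 2) * ‖v a - vminus‖ ^ 2 - (1 / 2) * ‖vminus‖ ^ 2
        + (lam / 2) * ∫ t in a..b, ‖v t‖ ^ 2 := by
  obtain ⟨c, hc⟩ := hv
  have hveq : v = fun t => ∑ i : Fin (q+1), t ^ (i:ℕ) • c i := funext hc
  set w : ℝ → H := fun t => ∑ i : Fin (q+1), (((i:ℕ):ℝ) * t ^ ((i:ℕ) - 1)) • c i with hw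
  have hvd : ∀ t, HasDerivAt v (w t) t := by
    intro t
    rw [hveq]
    exact HasDerivAt.fun_sum fun i _ => (hasDerivAt_pow (i:ℕ) t).smul_const (c i)
  have hderiv : deriv v = w := funext fun t => (hvd t).deriv
  have hvc : Continuous v := by
    rw [hveq]
    exact continuous_finset_sum _ fun i _ => (continuous_pow _).smul continuous_const
  have hwc : Continuous w := by
    rw [hw]
    exact continuous_finset_sum _ fun i _ =>
      (continuous_const.mul (continuous_pow _)).smul continuous_const
  have hφeq : φ = fun t => 1 - lam * (t - a) := funext hφ
  have hφc : Continuous φ := by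
    rw [hφeq]; continuity
  have hτpos : (0:ℝ) < τ := by rw [hτ]; linarith
  set g : ℝ → ℝ := fun t => ⟪v t, v t⟫ with hg
  have hgc : Continuous g := hvc.inner hvc
  have hFd : ∀ t, HasDerivAt (fun t => φ t * g t)
      (-lam * g t + φ t * (⟪v t, w t⟫ + ⟪w t, v t⟫)) t := by
    intro t
    have h1 : HasDerivAt φ (-lam) t := by
      rw [hφeq]
      simpa using (((hasDerivAt_id t).sub_const a).const_mul lam).const_sub 1
    have h2 : HasDerivAt g (⟪v t, w t⟫ + ⟪w t, v t⟫) t := (hvd t).inner ℝ (hvd t)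
    exact h1.mul h2
  have hipc : Continuous fun t => ⟪v t, w t⟫ + ⟪w t, v t⟫ :=
    (hvc.inner hwc).add (hwc.inner hvc)
  have hint : (∫ t in a..b, (-lam * g t + φ t * (⟪v t, w t⟫ + ⟪w t, v t⟫)))
      = φ b * g b - φ a * g a :=
    intervalIntegral.integral_eq_sub_of_hasDerivAt (fun t _ => hFd t)
      (((continuous_const.mul hgc).add (hφc.mul hipc)).intervalIntegrable _ _)
  rw [intervalIntegral.integral_add (f := fun t => -lam * g t)
      (g := fun t => φ t * (⟪v t, w t⟫ + ⟪w t, v t⟫))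
      ((continuous_const.mul hgc).intervalIntegrable _ _)
      ((hφc.mul hipc).intervalIntegrable _ _),
    intervalIntegral.integral_const_mul] at hint
  have hsplit : (∫ t in a..b, φ t * (⟪v t, w t⟫ + ⟪w t, v t⟫))
      = 2 * ∫ t in a..b, ⟪deriv v t, φ t • v t⟫ := by
    rw [← intervalIntegral.integral_const_mul]
    apply intervalIntegral.integral_congr
    intro t _
    dsimp only
    rw [hderiv, real_inner_smul_right, real_inner_comm (v t) (w t)]
    ring
  rw [hsplit] at hint
  have hnorm : (∫ t in a..b, ‖v t‖ ^ 2) = ∫ t in a..b, g t := by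
    apply intervalIntegral.integral_congr
    intro t _
    rw [hg]
    exact (real_inner_self_eq_norm_sq (v t)).symm
  rw [hnorm]
  have hφa : φ a = 1 := by rw [hφ]; ring
  have hφb : φ b = 1/2 := by
    have hba : b - a ≠ 0 := by linarith
    rw [hφ, hlam, hτ]
    field_simp
    ring
  rw [hφa, hφb] at hint
  have hgb : g b = ‖v b‖ ^ 2 := real_inner_self_eq_norm_sq (v b)
  have hga : g a = ‖v a‖ ^ 2 := real_inner_self_eq_norm_sq (v a)
  have e1 : ⟪v a - vminus, v a⟫ = ‖v a‖^2 - ⟪vminus, v a⟫ := by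
    rw [inner_sub_left, real_inner_self_eq_norm_sq]
  have e2 : ‖v a - vminus‖^2 = ‖v a‖^2 - 2 * ⟪vminus, v a⟫ + ‖vminus‖^2 := by
    rw [← real_inner_self_eq_norm_sq, inner_sub_left, inner_sub_right, inner_sub_right,
      real_inner_self_eq_norm_sq, real_inner_self_eq_norm_sq, real_inner_comm (v a) vminus]
    ring
  rw [hgb, hga] at hint
  rw [e1, e2]
  linarith
end

section
/- Let H be a real Hilbert space with inner product ⟨·,·⟩ and norm ‖·‖, let q ∈ ℕ, let N ≥ 1, and let 0 = t_0 < t_1 < … < t_N = T be a partition of [0,T]. For each n ∈ {1,…,N} let v_n be an H-valued polynomial of degree at most q. Then Σ_{n=1}^{N} ∫_{t_{n−1}}^{t_n} ⟨v_n'(t), v_n(t)⟩ dt + Σ_{n=1}^{N−1} ⟨v_{n+1}(t_n) − v_n(t_n), v_{n+1}(t_n)⟩ + ‖v_1(0)‖² = (1/2) ( ‖v_N(T)‖² + Σ_{n=1}^{N−1} ‖v_{n+1}(t_n) − v_n(t_n)‖² + ‖v_1(0)‖² ). -/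
open MeasureTheory Set RealInnerProductSpace

lemma telescope_aux (A u : ℕ → ℝ) :
    ∀ N, 1 ≤ N → (∑ n ∈ Finset.Icc 1 N, (A n - u (n - 1)))
      + (∑ n ∈ Finset.Icc 1 (N - 1), (u n - A n)) = A N - u 0 := by
  intro N hN
  induction N, hN using Nat.le_induction with
  | base => simp
  | succ N hN ih =>
    have h2 : ∑ n ∈ Finset.Icc 1 N, (u n - A n)
        = ∑ n ∈ Finset.Icc 1 (N - 1), (u n - A n) + (u N - A N) := by
      have h3 := Finset.sum_Icc_succ_top (show 1 ≤ N - 1 + 1 by omega) (fun n => u n - A n)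
      rw [show N - 1 + 1 = N from by omega] at h3
      exact h3
    rw [show N + 1 - 1 = N from rfl, Finset.sum_Icc_succ_top (by omega : 1 ≤ N + 1), h2,
        show N + 1 - 1 = N from rfl]
    linarith

lemma poly_integral {H : Type*} [NormedAddCommGroup H] [InnerProductSpace ℝ H]
    (q : ℕ) (f : ℝ → H) (hf : IsPolyDegLE H q f) (a b : ℝ) :
    ∫ s in a..b, ⟪deriv f s, f s⟫ = ‖f b‖ ^ 2 / 2 - ‖f a‖ ^ 2 / 2 := by
  obtain ⟨c, hc⟩ := hf
  set f' : ℝ → H := fun s => ∑ i : Fin (q + 1), (((i : ℕ) : ℝ) * s ^ ((i : ℕ) - 1)) • c i with hf'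
  have hderiv : ∀ s : ℝ, HasDerivAt f (f' s) s := by
    intro s
    have h : HasDerivAt (fun s : ℝ => ∑ i : Fin (q + 1), s ^ (i : ℕ) • c i) (f' s) s := by
      apply HasDerivAt.fun_sum
      intro i _
      exact (hasDerivAt_pow (i : ℕ) s).smul_const (c i)
    exact h.congr_of_eventuallyEq (Filter.Eventually.of_forall hc)
  have hderiv_eq : deriv f = f' := funext fun s => (hderiv s).deriv
  have hcontf : Continuous f := by
    have : Continuous fun s : ℝ => ∑ i : Fin (q + 1), s ^ (i : ℕ) • c i := by
      continuity
    exact this.congr fun x => (hc x).symm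
  have hcontf' : Continuous f' := by
    rw [hf']; continuity
  have hg : ∀ s ∈ uIcc a b, HasDerivAt (fun u => (⟪f u, f u⟫ : ℝ))
      (2 * ⟪f' s, f s⟫) s := by
    intro s _
    have := (hderiv s).inner ℝ (hderiv s)
    rw [show (2:ℝ) * ⟪f' s, f s⟫ = ⟪f s, f' s⟫ + ⟪f' s, f s⟫ by
      rw [real_inner_comm (f s) (f' s)]; ring]
    exact this
  have hint : IntervalIntegrable (fun s => (2 : ℝ) * ⟪f' s, f s⟫) volume a b :=
    (continuous_const.mul (hcontf'.inner hcontf)).intervalIntegrable a b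
  have key := intervalIntegral.integral_eq_sub_of_hasDerivAt hg hint
  rw [intervalIntegral.integral_const_mul] at key
  rw [hderiv_eq]
  rw [real_inner_self_eq_norm_sq, real_inner_self_eq_norm_sq] at key
  linarith

/-- Coercivity identity of the DG discretization of the first-order time derivative, tested
with the piecewise polynomial itself. -/
theorem dg_time_derivative_identity (H : Type*) [NormedAddCommGroup H]
    [InnerProductSpace ℝ H] [CompleteSpace H] (q N : ℕ) (hN : 1 ≤ N) (T : ℝ)
    (t : ℕ → ℝ) (ht0 : t 0 = 0) (htN : t N = T) (hmono : ∀ n < N, t n < t (n + 1))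
    (v : ℕ → ℝ → H) (hv : ∀ n ∈ Finset.Icc 1 N, IsPolyDegLE H q (v n)) :
    (∑ n ∈ Finset.Icc 1 N, ∫ s in t (n - 1)..t n, ⟪deriv (v n) s, v n s⟫)
      + (∑ n ∈ Finset.Icc 1 (N - 1), ⟪v (n + 1) (t n) - v n (t n), v (n + 1) (t n)⟫)
      + ‖v 1 0‖ ^ 2
    = (1 / 2) * (‖v N T‖ ^ 2
        + (∑ n ∈ Finset.Icc 1 (N - 1), ‖v (n + 1) (t n) - v n (t n)‖ ^ 2)
        + ‖v 1 0‖ ^ 2) := by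
  set A : ℕ → ℝ := fun n => ‖v n (t n)‖ ^ 2 with hA
  set u : ℕ → ℝ := fun n => ‖v (n + 1) (t n)‖ ^ 2 with hu
  have hS1 : (∑ n ∈ Finset.Icc 1 N, ∫ s in t (n - 1)..t n, ⟪deriv (v n) s, v n s⟫)
      = ∑ n ∈ Finset.Icc 1 N, (A n / 2 - u (n - 1) / 2) := by
    apply Finset.sum_congr rfl
    intro n hn
    have hn1 : 1 ≤ n := (Finset.mem_Icc.mp hn).1
    have := poly_integral q (v n) (hv n hn) (t (n - 1)) (t n)
    rw [this]
    simp only [hA, hu, show n - 1 + 1 = n from by omega]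
  have hS2 : (∑ n ∈ Finset.Icc 1 (N - 1), ⟪v (n + 1) (t n) - v n (t n), v (n + 1) (t n)⟫)
      = ∑ n ∈ Finset.Icc 1 (N - 1),
          ((u n - A n) / 2 + ‖v (n + 1) (t n) - v n (t n)‖ ^ 2 / 2) := by
    apply Finset.sum_congr rfl
    intro n _
    have h := real_inner_sub_sub_self (v (n + 1) (t n)) (v n (t n))
    have h2 := real_inner_self_eq_norm_sq (v (n + 1) (t n) - v n (t n))
    have h3 := real_inner_self_eq_norm_sq (v (n + 1) (t n))
    have h4 := real_inner_self_eq_norm_sq (v n (t n))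
    have h5 : (⟪v (n + 1) (t n) - v n (t n), v (n + 1) (t n)⟫ : ℝ)
        = ⟪v (n + 1) (t n), v (n + 1) (t n)⟫ - ⟪v n (t n), v (n + 1) (t n)⟫ := by
      rw [inner_sub_left]
    have h6 : (⟪v n (t n), v (n + 1) (t n)⟫ : ℝ) = ⟪v (n + 1) (t n), v n (t n)⟫ :=
      real_inner_comm _ _
    simp only [hA, hu]
    rw [h5, h6]
    nlinarith [h, h2, h3, h4]
  have key := telescope_aux A u N hN
  have hAN : A N = ‖v N T‖ ^ 2 := by rw [hA]; simp [htN]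
  have hu0 : u 0 = ‖v 1 0‖ ^ 2 := by rw [hu]; simp [ht0]
  rw [hS1, hS2]
  rw [Finset.sum_sub_distrib] at key
  rw [Finset.sum_add_distrib]
  have e1 : ∑ n ∈ Finset.Icc 1 N, (A n / 2 - u (n - 1) / 2)
      = ((∑ n ∈ Finset.Icc 1 N, A n) - ∑ n ∈ Finset.Icc 1 N, u (n - 1)) / 2 := by
    rw [Finset.sum_sub_distrib, ← Finset.sum_div, ← Finset.sum_div]; ring
  have e2 : ∑ n ∈ Finset.Icc 1 (N - 1), (u n - A n) / 2
      = ((∑ n ∈ Finset.Icc 1 (N - 1), u n) - ∑ n ∈ Finset.Icc 1 (N - 1), A n) / 2 := by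
    rw [← Finset.sum_sub_distrib, ← Finset.sum_div]
  have e3 : ∑ n ∈ Finset.Icc 1 (N - 1), ‖v (n + 1) (t n) - v n (t n)‖ ^ 2 / 2
      = (∑ n ∈ Finset.Icc 1 (N - 1), ‖v (n + 1) (t n) - v n (t n)‖ ^ 2) / 2 := by
    rw [← Finset.sum_div]
  rw [Finset.sum_sub_distrib] at key
  rw [e1, e2, e3]
  rw [hAN, hu0] at key
  linarith [key]
end

section
/- Let H be a real Hilbert space with inner product ⟨·,·⟩, let q ≥ 1 be an integer, and let a < b with τ = b − a, λ = 1/(2τ), and φ(t) = 1 − λ(t − a). Let u be an H-valued polynomial of degree at most q and let p be an H-valued polynomial of degree at most q − 1 such that ∫_a^b ⟨u(t) − p(t), w(t)⟩ dt = 0 for every H-valued polynomial w of degree at most q − 1. Then −∫_a^b φ(t) ⟨u'(t), u(t) − p(t)⟩ dt ≥ 0. -/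
open MeasureTheory Set RealInnerProductSpace

/-- An `H`-valued polynomial of degree at most `q - 1` (i.e. with `q` coefficients):
`t ↦ ∑_{i=0}^{q-1} t^i • c i`. -/
def IsPolyDegLT (H : Type*) [AddCommGroup H] [Module ℝ H] (q : ℕ) (f : ℝ → H) : Prop :=
  ∃ c : Fin q → H, ∀ t : ℝ, f t = ∑ i : Fin q, t ^ (i : ℕ) • c i

section AuxPolyLemmas
variable {H : Type*} [NormedAddCommGroup H] [InnerProductSpace ℝ H]

private lemma master_sum (n : ℕ) (A : ℕ → H) (α β γ : ℝ)
    (h : (β * n + γ) • A n = 0) (t : ℝ) :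
    ∑ i ∈ Finset.range (n + 1), ((α + β * t) * ((i : ℝ) * t ^ (i - 1)) + γ * t ^ i) • A i
      = ∑ i ∈ Finset.range n,
          t ^ i • ((α * ((i : ℝ) + 1)) • A (i + 1) + (β * (i : ℝ) + γ) • A i) := by
  have key : ∀ i : ℕ,
      ((α + β * t) * ((i : ℝ) * t ^ (i - 1)) + γ * t ^ i) • A i
        = (α * ((i : ℝ) * t ^ (i - 1))) • A i + ((β * (i : ℝ) + γ) * t ^ i) • A i := by
    intro i
    cases i with
    | zero => simp
    | succ m =>
      rw [← add_smul]
      congr 1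
      have h1 : m + 1 - 1 = m := rfl
      rw [h1]
      push_cast
      ring
  rw [Finset.sum_congr rfl fun i _ => key i, Finset.sum_add_distrib]
  have h1 : ∑ i ∈ Finset.range (n + 1), (α * ((i : ℝ) * t ^ (i - 1))) • A i
      = ∑ i ∈ Finset.range n, (α * (((i : ℝ) + 1) * t ^ i)) • A (i + 1) := by
    rw [Finset.sum_range_succ' (fun i => (α * ((i : ℝ) * t ^ (i - 1))) • A i) n]
    simp [Nat.add_sub_cancel]
  have h2 : ∑ i ∈ Finset.range (n + 1), ((β * (i : ℝ) + γ) * t ^ i) • A i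
      = ∑ i ∈ Finset.range n, ((β * (i : ℝ) + γ) * t ^ i) • A i := by
    rw [Finset.sum_range_succ, mul_comm, mul_smul, h, smul_zero, add_zero]
  rw [h1, h2, ← Finset.sum_add_distrib]
  refine Finset.sum_congr rfl fun i _ => ?_
  module

private lemma isPolyDegLT_combo (q : ℕ) (A : ℕ → H) (α β γ : ℝ)
    (h : (β * q + γ) • A q = 0) :
    IsPolyDegLT H q (fun t =>
      (α + β * t) • (∑ i ∈ Finset.range (q + 1), ((i : ℝ) * t ^ (i - 1)) • A i)
        + γ • (∑ i ∈ Finset.range (q + 1), t ^ i • A i)) := by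
  refine ⟨fun i => (α * ((i : ℝ) + 1)) • A ((i : ℕ) + 1) + (β * (i : ℝ) + γ) • A i,
    fun t => ?_⟩
  beta_reduce
  rw [Fin.sum_univ_eq_sum_range
    (fun i => t ^ i • ((α * ((i : ℝ) + 1)) • A (i + 1) + (β * (i : ℝ) + γ) • A i)) q]
  rw [← master_sum q A α β γ h t]
  rw [Finset.smul_sum, Finset.smul_sum, ← Finset.sum_add_distrib]
  refine Finset.sum_congr rfl fun i _ => ?_
  rw [smul_smul, smul_smul, add_smul]

private lemma hasDerivAt_polySum (n : ℕ) (A : ℕ → H) (t : ℝ) :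
    HasDerivAt (fun s : ℝ => ∑ i ∈ Finset.range n, s ^ i • A i)
      (∑ i ∈ Finset.range n, ((i : ℝ) * t ^ (i - 1)) • A i) t :=
  HasDerivAt.fun_sum fun i _ => (hasDerivAt_pow i t).smul_const (A i)

private lemma cont_polySum (n : ℕ) (A : ℕ → H) :
    Continuous fun s : ℝ => ∑ i ∈ Finset.range n, s ^ i • A i :=
  continuous_finset_sum _ fun i _ => (continuous_pow i).smul continuous_const

private lemma cont_derivSum (n : ℕ) (A : ℕ → H) :
    Continuous fun s : ℝ => ∑ i ∈ Finset.range n, ((i : ℝ) * s ^ (i - 1)) • A i :=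
  continuous_finset_sum _ fun i _ =>
    (continuous_const.mul (continuous_pow _)).smul continuous_const

end AuxPolyLemmas

/-- **Bound involving the weight `φ`.** If `p` is the `L²((a,b);H)`-orthogonal projection
of the polynomial `u` (degree at most `q`) onto polynomials of degree at most `q−1`, then
`−∫_a^b φ(t) ⟨u'(t), u(t) − p(t)⟩ dt ≥ 0`, where `φ(t) = 1 − λ(t − a)`, `λ = 1/(2τ)`. -/
theorem bound_varphi_projection (H : Type*) [NormedAddCommGroup H] [InnerProductSpace ℝ H]
    [CompleteSpace H] (q : ℕ) (hq : 1 ≤ q) (a b τ lam : ℝ) (hab : a < b) (hτ : τ = b - a)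
    (hlam : lam = 1 / (2 * τ)) (φ : ℝ → ℝ) (hφ : ∀ t, φ t = 1 - lam * (t - a))
    (u p : ℝ → H) (hu : IsPolyDegLE H q u) (hp : IsPolyDegLT H q p)
    (horth : ∀ w : ℝ → H, IsPolyDegLT H q w → (∫ t in a..b, ⟪u t - p t, w t⟫) = 0) :
    0 ≤ -∫ t in a..b, φ t * ⟪deriv u t, u t - p t⟫ := by
  obtain ⟨c, hc⟩ := hu
  obtain ⟨d, hd⟩ := hp
  -- extended coefficients
  set cc : ℕ → H := fun i => if h : i < q + 1 then c ⟨i, h⟩ else 0 with hcc_def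
  set dd : ℕ → H := fun i => if h : i < q then d ⟨i, h⟩ else 0 with hdd_def
  set aa : ℕ → H := fun i => cc i - dd i with haa_def
  have hddq : dd q = 0 := by simp [hdd_def]
  -- the functions
  set E : ℝ → H := fun t => ∑ i ∈ Finset.range (q + 1), t ^ i • aa i with hE_def
  set E' : ℝ → H := fun t => ∑ i ∈ Finset.range (q + 1), ((i : ℝ) * t ^ (i - 1)) • aa i
    with hE'_def
  set P : ℝ → H := fun t => ∑ i ∈ Finset.range (q + 1), t ^ i • dd i with hP_def
  set P' : ℝ → H := fun t => ∑ i ∈ Finset.range (q + 1), ((i : ℝ) * t ^ (i - 1)) • dd i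
    with hP'_def
  have hu_eq : ∀ t, u t = ∑ i ∈ Finset.range (q + 1), t ^ i • cc i := by
    intro t
    rw [hc t, ← Fin.sum_univ_eq_sum_range (fun i => t ^ i • cc i) (q + 1)]
    refine Finset.sum_congr rfl fun i _ => ?_
    simp [hcc_def, i.isLt, not_lt.mpr (Nat.lt_succ_iff.mp i.isLt)]
  have hp_eq : ∀ t, p t = P t := by
    intro t
    rw [hd t, hP_def]
    simp only [Finset.sum_range_succ, hddq, smul_zero, add_zero]
    rw [← Fin.sum_univ_eq_sum_range (fun i => t ^ i • dd i) q]
    refine Finset.sum_congr rfl fun i _ => ?_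
    simp [hdd_def, i.isLt]
  have hupE : ∀ t, u t - p t = E t := by
    intro t
    rw [hu_eq t, hp_eq t, hE_def, hP_def, ← Finset.sum_sub_distrib]
    exact Finset.sum_congr rfl fun i _ => by rw [haa_def, smul_sub]
  -- derivatives
  have hEd : ∀ t, HasDerivAt E (E' t) t := fun t => hasDerivAt_polySum (q + 1) aa t
  have hPd : ∀ t, HasDerivAt P (P' t) t := fun t => hasDerivAt_polySum (q + 1) dd t
  have hud : ∀ t, HasDerivAt u (E' t + P' t) t := by
    intro t
    have : u = fun s => E s + P s := by
      funext s
      have := hupE s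
      have h2 := hp_eq s
      rw [← this, ← h2]; abel
    rw [this]
    exact (hEd t).add (hPd t)
  have hderiv_u : ∀ t, deriv u t = E' t + P' t := fun t => (hud t).deriv
  -- continuity
  have cE : Continuous E := cont_polySum (q + 1) aa
  have cE' : Continuous E' := cont_derivSum (q + 1) aa
  have cP' : Continuous P' := cont_derivSum (q + 1) dd
  have cF : Continuous fun t => ⟪E t, E t⟫ := cE.inner cE
  have cEE : Continuous fun t => ⟪E' t, E t⟫ := cE'.inner cE
  -- the quantities
  set S : ℝ := ∫ t in a..b, ⟪E t, E t⟫ with hS_def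
  set J1 : ℝ := ∫ t in a..b, ⟪E' t, E t⟫ with hJ1_def
  set J2 : ℝ := ∫ t in a..b, (t - a) * ⟪E' t, E t⟫ with hJ2_def
  set J3 : ℝ := ∫ t in a..b, (b - t) * ⟪E' t, E t⟫ with hJ3_def
  have hS_nonneg : 0 ≤ S :=
    intervalIntegral.integral_nonneg hab.le fun t _ => real_inner_self_nonneg
  -- derivative of F
  have hFd : ∀ t, HasDerivAt (fun s => ⟪E s, E s⟫) (2 * ⟪E' t, E t⟫) t := by
    intro t
    have := (hEd t).inner ℝ (hEd t)
    have h2 : ⟪E t, E' t⟫ + ⟪E' t, E t⟫ = 2 * ⟪E' t, E t⟫ := by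
      rw [real_inner_comm (E t) (E' t)]; ring
    rw [← h2]
    exact this
  -- FTC identities
  have eq1 : 2 * J1 = ⟪E b, E b⟫ - ⟪E a, E a⟫ := by
    rw [hJ1_def, ← intervalIntegral.integral_const_mul]
    exact intervalIntegral.integral_eq_sub_of_hasDerivAt (fun t _ => hFd t)
      ((continuous_const.mul cEE).intervalIntegrable a b)
  have eq2 : S + 2 * J2 = (b - a) * ⟪E b, E b⟫ := by
    have hG : ∀ t ∈ uIcc a b, HasDerivAt (fun s => (s - a) * ⟪E s, E s⟫)
        (1 * ⟪E t, E t⟫ + (t - a) * (2 * ⟪E' t, E t⟫)) t := by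
      intro t _
      exact ((hasDerivAt_id t).sub_const a).mul (hFd t)
    have hint := intervalIntegral.integral_eq_sub_of_hasDerivAt hG
      (Continuous.intervalIntegrable (by fun_prop) a b)
    rw [intervalIntegral.integral_add (Continuous.intervalIntegrable (by fun_prop) a b)
      (Continuous.intervalIntegrable (by fun_prop) a b)] at hint
    have e1 : (∫ t in a..b, 1 * ⟪E t, E t⟫) = S := by
      rw [hS_def]; congr 1; funext t; ring
    have e2 : (∫ t in a..b, (t - a) * (2 * ⟪E' t, E t⟫)) = 2 * J2 := by
      rw [hJ2_def, ← intervalIntegral.integral_const_mul]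
      congr 1; funext t; ring
    rw [e1, e2] at hint
    rw [hint]; ring
  have eq3 : -S + 2 * J3 = -((b - a) * ⟪E a, E a⟫) := by
    have hG : ∀ t ∈ uIcc a b, HasDerivAt (fun s => (b - s) * ⟪E s, E s⟫)
        ((0 - 1) * ⟪E t, E t⟫ + (b - t) * (2 * ⟪E' t, E t⟫)) t := by
      intro t _
      exact ((hasDerivAt_const t b).sub (hasDerivAt_id t)).mul (hFd t)
    have hint := intervalIntegral.integral_eq_sub_of_hasDerivAt hG
      (Continuous.intervalIntegrable (by fun_prop) a b)
    rw [intervalIntegral.integral_add (Continuous.intervalIntegrable (by fun_prop) a b)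
      (Continuous.intervalIntegrable (by fun_prop) a b)] at hint
    have e1 : (∫ t in a..b, (0 - 1 : ℝ) * ⟪E t, E t⟫) = -S := by
      rw [hS_def, ← intervalIntegral.integral_neg]
      congr 1; funext t; ring
    have e2 : (∫ t in a..b, (b - t) * (2 * ⟪E' t, E t⟫)) = 2 * J3 := by
      rw [hJ3_def, ← intervalIntegral.integral_const_mul]
      congr 1; funext t; ring
    rw [e1, e2] at hint
    rw [hint]; ring
  -- orthogonality identities
  have z2 : J2 = (q : ℝ) * S := by
    have h0 : ((1 : ℝ) * q + (-(q : ℝ))) • aa q = 0 := by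
      rw [show ((1 : ℝ) * q + (-(q : ℝ))) = 0 by ring, zero_smul]
    have hw := isPolyDegLT_combo (H := H) q aa (-a) 1 (-(q : ℝ)) h0
    have hz := horth _ hw
    have : (∫ t in a..b, ((t - a) * ⟪E' t, E t⟫ - (q : ℝ) * ⟪E t, E t⟫)) = 0 := by
      rw [← hz]
      congr 1; funext t
      rw [hupE t]
      rw [inner_add_right, real_inner_smul_right, real_inner_smul_right,
        real_inner_comm (E t) (E' t)]
      ring
    rw [intervalIntegral.integral_sub (Continuous.intervalIntegrable (by fun_prop) a b)
      (Continuous.intervalIntegrable (by fun_prop) a b),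
      intervalIntegral.integral_const_mul] at this
    rw [hJ2_def, hS_def]
    linarith [this]
  have z3 : J3 = -((q : ℝ) * S) := by
    have h0 : ((-1 : ℝ) * q + (q : ℝ)) • aa q = 0 := by
      rw [show ((-1 : ℝ) * q + (q : ℝ)) = 0 by ring, zero_smul]
    have hw := isPolyDegLT_combo (H := H) q aa b (-1) (q : ℝ) h0
    have hz := horth _ hw
    have : (∫ t in a..b, ((b - t) * ⟪E' t, E t⟫ + (q : ℝ) * ⟪E t, E t⟫)) = 0 := by
      rw [← hz]
      congr 1; funext t
      rw [hupE t]
      rw [inner_add_right, real_inner_smul_right, real_inner_smul_right,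
        real_inner_comm (E t) (E' t)]
      ring
    rw [intervalIntegral.integral_add (Continuous.intervalIntegrable (by fun_prop) a b)
      (Continuous.intervalIntegrable (by fun_prop) a b),
      intervalIntegral.integral_const_mul] at this
    rw [hJ3_def, hS_def]
    linarith [this]
  have z1 : (∫ t in a..b, ⟪E t, φ t • P' t⟫) = 0 := by
    have h0 : ((-lam : ℝ) * q + 0) • dd q = 0 := by rw [hddq, smul_zero]
    have hw := isPolyDegLT_combo (H := H) q dd (1 + lam * a) (-lam) 0 h0
    have hz := horth _ hw
    rw [← hz]
    congr 1; funext t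
    rw [hupE t]
    have : ((1 + lam * a) + (-lam) * t) • P' t + (0 : ℝ) • P t = φ t • P' t := by
      rw [zero_smul, add_zero, hφ t]
      congr 1; ring
    rw [← this]
  -- final computation
  have key : (∫ t in a..b, φ t * ⟪deriv u t, u t - p t⟫) = (J1 - lam * J2) + 0 := by
    have hpt : ∀ t, φ t * ⟪deriv u t, u t - p t⟫
        = (⟪E' t, E t⟫ - lam * ((t - a) * ⟪E' t, E t⟫)) + ⟪E t, φ t • P' t⟫ := by
      intro t
      rw [hderiv_u t, hupE t, inner_add_left, real_inner_smul_right,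
        real_inner_comm (E t) (P' t), hφ t]
      ring
    rw [intervalIntegral.integral_congr (g := fun t =>
        (⟪E' t, E t⟫ - lam * ((t - a) * ⟪E' t, E t⟫)) + ⟪E t, φ t • P' t⟫)
      (fun t _ => hpt t)]
    have cφ : Continuous φ := by
      have : φ = fun t => 1 - lam * (t - a) := funext hφ
      rw [this]; fun_prop
    have cZ : Continuous fun t => ⟪E t, φ t • P' t⟫ := cE.inner (cφ.smul cP')
    rw [intervalIntegral.integral_add (Continuous.intervalIntegrable (by fun_prop) a b)
      (cZ.intervalIntegrable a b),
      intervalIntegral.integral_sub (Continuous.intervalIntegrable (by fun_prop) a b)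
        (Continuous.intervalIntegrable (by fun_prop) a b),
      intervalIntegral.integral_const_mul, z1]
  have hFab : ⟪E a, E a⟫ = ⟪E b, E b⟫ := by
    have hBF : (b - a) * ⟪E b, E b⟫ = (2 * q + 1) * S := by
      rw [← eq2, z2]; ring
    have hAF : (b - a) * ⟪E a, E a⟫ = (2 * q + 1) * S := by
      have := eq3
      rw [z3] at this
      linarith
    have hba : b - a ≠ 0 := by linarith
    have := hBF.trans hAF.symm
    exact (mul_left_cancel₀ hba this).symm
  have hJ1 : J1 = 0 := by
    have := eq1
    rw [hFab] at this
    linarith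
  rw [key, hJ1, z2]
  have hlam_pos : 0 < lam := by
    rw [hlam]
    apply div_pos one_pos
    rw [hτ]; linarith
  have hfin : (0:ℝ) ≤ lam * ((q:ℝ) * S) :=
    mul_nonneg hlam_pos.le (mul_nonneg (Nat.cast_nonneg q) hS_nonneg)
  linarith
end

section
/- Let H be a real Hilbert space with inner product ⟨·,·⟩ and norm ‖·‖, and let q ∈ ℕ. There exists a constant C > 0 depending only on q with the following property: for all a < b, every continuous function v : [a,b] → H, and every H-valued polynomial p of degree at most q satisfying p(b) = v(b) and ∫_a^b ⟨v(t) − p(t), w(t)⟩ dt = 0 for every H-valued polynomial w of degree at most q − 1 (this orthogonality condition is vacuous when q = 0), one has sup_{t ∈ [a,b]} ‖p(t)‖ ≤ C sup_{t ∈ [a,b]} ‖v(t)‖. -/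
open MeasureTheory Set RealInnerProductSpace

lemma poly_comp_affine {H : Type*} [AddCommGroup H] [Module ℝ H] (n : ℕ)
    (c : Fin n → H) (α β : ℝ) :
    ∃ c' : Fin n → H, ∀ s : ℝ,
      ∑ i : Fin n, (α + s * β) ^ (i : ℕ) • c i = ∑ k : Fin n, s ^ (k : ℕ) • c' k := by
  refine ⟨fun k => ∑ i : Fin n,
    (((i : ℕ).choose k : ℝ) * β ^ (k : ℕ) * α ^ ((i : ℕ) - (k : ℕ))) • c i, fun s => ?_⟩
  have : ∀ k : Fin n, s ^ (k : ℕ) • ∑ i : Fin n,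
      (((i : ℕ).choose k : ℝ) * β ^ (k : ℕ) * α ^ ((i : ℕ) - (k : ℕ))) • c i
      = ∑ i : Fin n,
      (s ^ (k : ℕ) * (((i : ℕ).choose k : ℝ) * β ^ (k : ℕ) * α ^ ((i : ℕ) - (k : ℕ)))) • c i := by
    intro k
    rw [Finset.smul_sum]
    simp [smul_smul]
  simp_rw [this]
  rw [Finset.sum_comm]
  refine Finset.sum_congr rfl fun i _ => ?_
  rw [← Finset.sum_smul]
  congr 1
  have hext : ∑ k : Fin n,
      s ^ (k : ℕ) * (((i : ℕ).choose k : ℝ) * β ^ (k : ℕ) * α ^ ((i : ℕ) - (k : ℕ)))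
      = ∑ k ∈ Finset.range ((i : ℕ) + 1),
      s ^ k * ((((i : ℕ).choose k : ℝ)) * β ^ k * α ^ ((i : ℕ) - k)) := by
    rw [Fin.sum_univ_eq_sum_range (fun k => s ^ k * (((i : ℕ).choose k : ℝ) * β ^ k * α ^ ((i : ℕ) - k)))]
    refine (Finset.sum_subset ?_ ?_).symm
    · intro k hk; simp only [Finset.mem_range] at hk ⊢; have := i.isLt; omega
    · intro k _ hk
      simp only [Finset.mem_range, not_lt] at hk
      rw [Nat.choose_eq_zero_of_lt (by omega)]
      simp
  rw [hext, add_comm α (s * β), add_pow]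
  refine Finset.sum_congr rfl fun k hk => ?_
  rw [mul_pow]
  ring

noncomputable def thomeeM (q : ℕ) : Matrix (Fin (q + 1)) (Fin (q + 1)) ℝ :=
  Matrix.of fun j i => if (j : ℕ) < q then (((i : ℕ) : ℝ) + ((j : ℕ) : ℝ) + 1)⁻¹ else 1

lemma thomeeM_ker (q : ℕ) (x : Fin (q + 1) → ℝ) (hx : (thomeeM q).mulVec x = 0) :
    x = 0 := by
  have hrow : ∀ j : Fin (q + 1), ∑ i : Fin (q + 1), thomeeM q j i * x i = 0 := by
    intro j
    have := congrFun hx j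
    simpa [Matrix.mulVec, dotProduct] using this
  have h1 : ∑ i : Fin (q + 1), x i = 0 := by
    have := hrow (Fin.last q)
    simpa [thomeeM] using this
  have h2 : ∀ j : ℕ, j < q →
      ∑ i : Fin (q + 1), (((i : ℕ) : ℝ) + (j : ℝ) + 1)⁻¹ * x i = 0 := by
    intro j hj
    have := hrow ⟨j, by omega⟩
    simpa [thomeeM, hj] using this
  -- the polynomial with coefficients x
  set P : Polynomial ℝ := ∑ i : Fin (q + 1), Polynomial.C (x i) * Polynomial.X ^ (i : ℕ) with hP
  have hcoeff : ∀ i : Fin (q + 1), P.coeff (i : ℕ) = x i := by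
    intro i
    rw [hP, Polynomial.finset_sum_coeff]
    simp only [Polynomial.coeff_C_mul, Polynomial.coeff_X_pow]
    rw [Finset.sum_eq_single i]
    · simp
    · intro b _ hb
      have : (i : ℕ) ≠ (b : ℕ) := fun h => hb (Fin.ext h.symm)
      simp [this]
    · simp
  have heval : ∀ t : ℝ, P.eval t = ∑ i : Fin (q + 1), x i * t ^ (i : ℕ) := by
    intro t; rw [hP]; simp [Polynomial.eval_finset_sum]
  by_cases hP0 : P = 0
  · funext i; rw [← hcoeff i, hP0]; simp
  · exfalso
    have hdeg : P.natDegree ≤ q := by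
      rw [hP]
      refine Polynomial.natDegree_sum_le_of_forall_le _ _ fun i _ => ?_
      refine le_trans (Polynomial.natDegree_C_mul_le _ _) ?_
      rw [Polynomial.natDegree_X_pow]
      exact Nat.lt_succ_iff.mp i.isLt
    have hroot : P.IsRoot 1 := by
      rw [Polynomial.IsRoot, heval]
      simpa using h1
    obtain ⟨Q, hPQ⟩ := (Polynomial.dvd_iff_isRoot.mpr hroot)
    have hQ0 : Q ≠ 0 := by
      intro h; rw [h, mul_zero] at hPQ; exact hP0 hPQ
    have hQdeg : Q.natDegree < q := by
      have hXC : (Polynomial.X - Polynomial.C (1 : ℝ)) ≠ 0 := Polynomial.X_sub_C_ne_zero 1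
      have := Polynomial.natDegree_mul hXC hQ0
      rw [← hPQ, Polynomial.natDegree_X_sub_C] at this
      have hq1 : 1 + Q.natDegree ≤ q := this ▸ hdeg
      by_cases hq : q = 0
      · exfalso; omega
      · omega
    -- moments of P vanish against t^k for k < q
    have hmom : ∀ k : ℕ, k < q → (∫ t in (0:ℝ)..1, t ^ k * P.eval t) = 0 := by
      intro k hk
      have : (∫ t in (0:ℝ)..1, t ^ k * P.eval t)
          = ∑ i : Fin (q + 1), (∫ t in (0:ℝ)..1, x i * t ^ ((i : ℕ) + k)) := by
        rw [← intervalIntegral.integral_finset_sum]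
        · congr 1; funext t
          rw [heval, Finset.mul_sum]
          refine Finset.sum_congr rfl fun i _ => ?_
          ring
        · intro i _
          exact (Continuous.intervalIntegrable (continuous_const.mul (continuous_pow _)) _ _)
      rw [this]
      have : ∀ i : Fin (q + 1), (∫ t in (0:ℝ)..1, x i * t ^ ((i : ℕ) + k))
          = (((i : ℕ) : ℝ) + (k : ℝ) + 1)⁻¹ * x i := by
        intro i
        rw [intervalIntegral.integral_const_mul, integral_pow]
        have h0 : ((0:ℝ)) ^ ((i : ℕ) + k + 1) = 0 := zero_pow (by omega)
        rw [one_pow, h0, sub_zero]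
        push_cast
        rw [div_eq_mul_inv, one_mul]
        ring
      simp_rw [this]
      exact h2 k hk
    -- hence ∫ P Q = 0
    have hPQint : (∫ t in (0:ℝ)..1, P.eval t * Q.eval t) = 0 := by
      have hQev : ∀ t : ℝ, Q.eval t = ∑ k ∈ Finset.range q, Q.coeff k * t ^ k := fun t =>
        Polynomial.eval_eq_sum_range' hQdeg t
      have : (∫ t in (0:ℝ)..1, P.eval t * Q.eval t)
          = ∑ k ∈ Finset.range q, (∫ t in (0:ℝ)..1, Q.coeff k * (t ^ k * P.eval t)) := by
        rw [← intervalIntegral.integral_finset_sum]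
        · congr 1; funext t
          rw [hQev t, Finset.mul_sum]
          refine Finset.sum_congr rfl fun k _ => ?_
          ring
        · intro k _
          exact (Continuous.intervalIntegrable
            (continuous_const.mul ((continuous_pow _).mul P.continuous)) _ _)
      rw [this]
      refine Finset.sum_eq_zero fun k hk => ?_
      rw [intervalIntegral.integral_const_mul, hmom k (Finset.mem_range.mp hk), mul_zero]
    -- but ∫ (1 - t) Q(t)^2 > 0
    have hpos : 0 < ∫ t in (0:ℝ)..1, (1 - t) * Q.eval t ^ 2 := by
      refine intervalIntegral.integral_pos zero_lt_one ?_ ?_ ?_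
      · exact ((continuous_const.sub continuous_id).mul (Q.continuous.pow 2)).continuousOn
      · intro t ht
        have h1t : 0 ≤ 1 - t := by linarith [ht.2]
        exact mul_nonneg h1t (sq_nonneg _)
      · obtain ⟨t0, ht0⟩ : ∃ t0, t0 ∈ Ico (0:ℝ) 1 \ {t | Q.IsRoot t} := by
          have hfin : {t : ℝ | Q.IsRoot t}.Finite := Polynomial.finite_setOf_isRoot hQ0
          have hinf : (Ico (0:ℝ) 1).Infinite := Set.Ico_infinite zero_lt_one
          exact (hinf.diff hfin).nonempty
        refine ⟨t0, ⟨ht0.1.1, ht0.1.2.le⟩, ?_⟩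
        have hne : Q.eval t0 ≠ 0 := ht0.2
        have h1t : 0 < 1 - t0 := by linarith [ht0.1.2]
        exact mul_pos h1t (sq_pos_iff.mpr hne)
    have : (∫ t in (0:ℝ)..1, (1 - t) * Q.eval t ^ 2) = - ∫ t in (0:ℝ)..1, P.eval t * Q.eval t := by
      rw [← intervalIntegral.integral_neg]
      congr 1; funext t
      have : P.eval t = (t - 1) * Q.eval t := by rw [hPQ]; simp
      rw [this]; ring
    rw [this, hPQint, neg_zero] at hpos
    exact lt_irrefl 0 hpos

lemma thomeeM_exists_inv' (q : ℕ) (M : Matrix (Fin (q+1)) (Fin (q+1)) ℝ)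
    (hker : ∀ x, M.mulVec x = 0 → x = 0) :
    ∃ N : Matrix (Fin (q+1)) (Fin (q+1)) ℝ, N * M = 1 := by
  have hinj : Function.Injective M.mulVec := by
    intro x y h
    have h0 : M.mulVec (x - y) = 0 := by rw [Matrix.mulVec_sub, h, sub_self]
    exact sub_eq_zero.mp (hker _ h0)
  have hunit : IsUnit M := Matrix.mulVec_injective_iff_isUnit.mp hinj
  exact ⟨M⁻¹, Matrix.nonsing_inv_mul _ ((Matrix.isUnit_iff_isUnit_det _).mp hunit)⟩

lemma matrix_solve {H : Type*} [AddCommGroup H] [Module ℝ H] {n : ℕ}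
    (M N : Matrix (Fin n) (Fin n) ℝ) (hNM : N * M = 1)
    (c d : Fin n → H) (h : ∀ j, ∑ i : Fin n, M j i • c i = d j) :
    ∀ i, c i = ∑ j : Fin n, N i j • d j := by
  intro i
  have h1 : ∑ j : Fin n, N i j • d j = ∑ j : Fin n, N i j • ∑ k : Fin n, M j k • c k := by
    simp_rw [h]
  rw [h1]
  have h2 : ∀ j : Fin n, N i j • ∑ k : Fin n, M j k • c k
      = ∑ k : Fin n, (N i j * M j k) • c k := by
    intro j; rw [Finset.smul_sum]; simp [smul_smul]
  simp_rw [h2]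
  rw [Finset.sum_comm]
  have h3 : ∀ k : Fin n, (∑ j : Fin n, (N i j * M j k) • c k) = ((N * M) i k) • c k := by
    intro k; rw [← Finset.sum_smul, Matrix.mul_apply]
  simp_rw [h3, hNM]
  simp [Matrix.one_apply]

lemma thomeeM_exists_inv (q : ℕ) :
    ∃ N : Matrix (Fin (q+1)) (Fin (q+1)) ℝ, N * thomeeM q = 1 :=
  thomeeM_exists_inv' q _ (thomeeM_ker q)

/-- **Stability of the Thomée projection in the `L^∞` norm.** There is a constant `C > 0`
depending only on `q` such that for all `a < b`, every continuous `v : [a,b] → H`, and every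
polynomial `p` of degree at most `q` with `p(b) = v(b)` and `v − p` `L²`-orthogonal to all
polynomials of degree at most `q − 1`, one has
`sup_{t ∈ [a,b]} ‖p(t)‖ ≤ C sup_{t ∈ [a,b]} ‖v(t)‖`. -/
theorem thomee_projection_stability (H : Type*) [NormedAddCommGroup H]
    [InnerProductSpace ℝ H] [CompleteSpace H] (q : ℕ) :
    ∃ C : ℝ, 0 < C ∧
      ∀ (a b : ℝ), a < b →
        ∀ v : ℝ → H, ContinuousOn v (Icc a b) →
          ∀ p : ℝ → H, IsPolyDegLE H q p → p b = v b →
            (∀ w : ℝ → H, IsPolyDegLT H q w → (∫ t in a..b, ⟪v t - p t, w t⟫) = 0) →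
            (⨆ t : Icc a b, ‖p (t : ℝ)‖) ≤ C * ⨆ t : Icc a b, ‖v (t : ℝ)‖ := by
  obtain ⟨N, hNM⟩ := thomeeM_exists_inv q
  set K : ℝ := ∑ k : Fin (q+1), ∑ j : Fin (q+1), |N k j| with hK
  have hK0 : 0 ≤ K :=
    Finset.sum_nonneg fun k _ => Finset.sum_nonneg fun j _ => abs_nonneg _
  refine ⟨K + 1, by linarith, ?_⟩
  intro a b hab v hv p hp hpb horth
  set e : ℝ := b - a with he'
  have he : 0 < e := sub_pos.mpr hab
  have hene : e ≠ 0 := ne_of_gt he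
  have hne : (Icc a b).Nonempty := nonempty_Icc.mpr hab.le
  haveI : Nonempty (Icc a b) := hne.to_subtype
  set S : ℝ := ⨆ t : Icc a b, ‖v (t : ℝ)‖ with hS
  have hbdd : BddAbove (range fun t : Icc a b => ‖v (t : ℝ)‖) := by
    obtain ⟨Cv, hCv⟩ := (isCompact_Icc.image_of_continuousOn hv.norm).bddAbove
    refine ⟨Cv, ?_⟩
    rintro _ ⟨t, rfl⟩
    exact hCv ⟨t.1, t.2, rfl⟩
  have hvle : ∀ t ∈ Icc a b, ‖v t‖ ≤ S := fun t ht => le_ciSup hbdd ⟨t, ht⟩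
  have hS0 : 0 ≤ S := le_trans (norm_nonneg _) (hvle b ⟨hab.le, le_rfl⟩)
  obtain ⟨c, hc⟩ := hp
  obtain ⟨c', hc'⟩ := poly_comp_affine (q + 1) c a e
  have hptil : ∀ s : ℝ, p (a + s * e) = ∑ k : Fin (q+1), s ^ (k : ℕ) • c' k := by
    intro s; rw [hc]; exact hc' s
  have hmem : ∀ s ∈ Icc (0:ℝ) 1, a + s * e ∈ Icc a b := by
    intro s hs
    constructor
    · nlinarith [hs.1, hs.2]
    · nlinarith [hs.1, hs.2]
  have hvtilc : ContinuousOn (fun s : ℝ => v (a + s * e)) (Icc 0 1) := by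
    refine hv.comp ((continuous_const.add (continuous_id.mul continuous_const)).continuousOn) ?_
    intro s hs; exact hmem s hs
  have hptilc : Continuous (fun s : ℝ => p (a + s * e)) := by
    have : (fun s : ℝ => p (a + s * e)) = fun s => ∑ k : Fin (q+1), s ^ (k : ℕ) • c' k := by
      funext s; exact hptil s
    rw [this]
    exact continuous_finset_sum _ fun k _ => (continuous_pow _).smul continuous_const
  -- the data vector
  set d : Fin (q+1) → H := fun j =>
    if (j : ℕ) < q then ∫ s in (0:ℝ)..1, s ^ (j : ℕ) • v (a + s * e) else v b with hd
  -- row identities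
  have hrows : ∀ j : Fin (q+1), ∑ i : Fin (q+1), thomeeM q j i • c' i = d j := by
    intro j
    by_cases hj : (j : ℕ) < q
    · -- orthogonality rows
      -- the vector-valued orthogonality
      set g : ℝ → H := fun s => s ^ (j : ℕ) • (v (a + s * e) - p (a + s * e)) with hg
      have hgc : ContinuousOn g (Icc 0 1) :=
        (continuous_pow _).continuousOn.smul (hvtilc.sub hptilc.continuousOn)
      have hgint : IntervalIntegrable g volume 0 1 := by
        apply ContinuousOn.intervalIntegrable
        rwa [uIcc_of_le zero_le_one]
      have hg0 : (∫ s in (0:ℝ)..1, g s) = 0 := by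
        have key : ∀ h : H, ⟪(∫ s in (0:ℝ)..1, g s), h⟫ = 0 := by
          intro h
          -- build the test polynomial w
          set c0 : Fin q → H := fun k => if k = ⟨(j : ℕ), hj⟩ then h else 0 with hc0
          obtain ⟨c0', hc0'⟩ := poly_comp_affine q c0 (-(a / e)) e⁻¹
          set w : ℝ → H := fun t => ∑ i : Fin q, (-(a / e) + t * e⁻¹) ^ (i : ℕ) • c0 i with hw
          have hwpoly : IsPolyDegLT H q w := ⟨c0', fun t => hc0' t⟩
          have hworth := horth w hwpoly
          -- change of variables
          have hcv : (∫ s in (0:ℝ)..1, ⟪v (e * s + a) - p (e * s + a), w (e * s + a)⟫)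
              = e⁻¹ • ∫ t in a..b, ⟪v t - p t, w t⟫ := by
            have := intervalIntegral.integral_comp_mul_add
              (a := (0:ℝ)) (b := (1:ℝ)) (f := fun t => ⟪v t - p t, w t⟫) hene a
            simpa [he'] using this
          have hwz : ∀ s : ℝ, w (e * s + a) = s ^ (j : ℕ) • h := by
            intro s
            have harg : -(a / e) + (e * s + a) * e⁻¹ = s := by field_simp; ring
            rw [hw]
            simp only [harg]
            rw [hc0, Finset.sum_eq_single (⟨(j : ℕ), hj⟩ : Fin q)]
            · simp
            · intro i _ hi; simp [hi]
            · simp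
          have hz : (∫ s in (0:ℝ)..1, ⟪g s, h⟫) = 0 := by
            have heq : ∀ s : ℝ, ⟪v (e * s + a) - p (e * s + a), w (e * s + a)⟫ = ⟪g s, h⟫ := by
              intro s
              rw [hwz s, hg]
              simp only [add_comm a (s * e), mul_comm e s]
              rw [real_inner_smul_right, real_inner_smul_left]
            have hzz : (∫ s in (0:ℝ)..1,
                ⟪v (e * s + a) - p (e * s + a), w (e * s + a)⟫) = 0 := by
              rw [hcv, hworth, smul_zero]
            exact (intervalIntegral.integral_congr fun s _ => (heq s).symm).trans hzz
          have hcomm := ContinuousLinearMap.intervalIntegral_comp_comm (innerSL ℝ h) hgint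
          rw [real_inner_comm]
          calc ⟪h, ∫ s in (0:ℝ)..1, g s⟫
              = (innerSL ℝ h) (∫ s in (0:ℝ)..1, g s) := by simp
            _ = ∫ s in (0:ℝ)..1, (innerSL ℝ h) (g s) := hcomm.symm
            _ = ∫ s in (0:ℝ)..1, ⟪g s, h⟫ := by
                refine intervalIntegral.integral_congr fun s _ => ?_
                simp [real_inner_comm]
            _ = 0 := hz
        have hkey := key (∫ s in (0:ℝ)..1, g s)
        rwa [real_inner_self_eq_norm_sq, pow_eq_zero_iff (by omega), norm_eq_zero] at hkey
      -- now compute the row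
      have hvint : IntervalIntegrable (fun s => s ^ (j : ℕ) • v (a + s * e)) volume 0 1 := by
        apply ContinuousOn.intervalIntegrable
        rw [uIcc_of_le zero_le_one]
        exact (continuous_pow _).continuousOn.smul hvtilc
      have hpint' : IntervalIntegrable (fun s => s ^ (j : ℕ) • p (a + s * e)) volume 0 1 :=
        ((continuous_pow _).smul hptilc).intervalIntegrable _ _
      have hsplit : (∫ s in (0:ℝ)..1, s ^ (j : ℕ) • v (a + s * e))
          = ∫ s in (0:ℝ)..1, s ^ (j : ℕ) • p (a + s * e) := by
        have : (∫ s in (0:ℝ)..1, s ^ (j : ℕ) • v (a + s * e))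
            = (∫ s in (0:ℝ)..1, s ^ (j : ℕ) • p (a + s * e)) + ∫ s in (0:ℝ)..1, g s := by
          rw [← intervalIntegral.integral_add hpint' hgint]
          refine intervalIntegral.integral_congr fun s _ => ?_
          rw [hg]
          simp only [smul_sub]
          abel
        rw [this, hg0, add_zero]
      have hpcalc : (∫ s in (0:ℝ)..1, s ^ (j : ℕ) • p (a + s * e))
          = ∑ i : Fin (q+1), (((i : ℕ) : ℝ) + ((j : ℕ) : ℝ) + 1)⁻¹ • c' i := by
        have h1 : (∫ s in (0:ℝ)..1, s ^ (j : ℕ) • p (a + s * e))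
            = ∑ i : Fin (q+1), ∫ s in (0:ℝ)..1, s ^ ((j : ℕ) + (i : ℕ)) • c' i := by
          rw [← intervalIntegral.integral_finset_sum]
          · refine intervalIntegral.integral_congr fun s _ => ?_
            rw [hptil, Finset.smul_sum]
            refine Finset.sum_congr rfl fun i _ => ?_
            rw [smul_smul, ← pow_add]
          · intro i _
            exact ((continuous_pow _).smul continuous_const).intervalIntegrable _ _
        rw [h1]
        refine Finset.sum_congr rfl fun i _ => ?_
        rw [intervalIntegral.integral_smul_const, integral_pow, one_pow,
          zero_pow (by omega), sub_zero]
        congr 1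
        push_cast
        rw [div_eq_mul_inv, one_mul]
        ring_nf
      have hM : ∀ i : Fin (q+1), thomeeM q j i = (((i : ℕ) : ℝ) + ((j : ℕ) : ℝ) + 1)⁻¹ := by
        intro i; simp [thomeeM, hj]
      simp_rw [hM]
      rw [hd]
      simp only [hj, if_true]
      rw [hsplit, hpcalc]
    · -- last row
      have hM : ∀ i : Fin (q+1), thomeeM q j i = 1 := by
        intro i; simp [thomeeM, hj]
      simp_rw [hM, one_smul]
      rw [hd]
      simp only [hj, if_false]
      have hb1 : a + 1 * e = b := by rw [he']; ring
      have := hptil 1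
      rw [hb1] at this
      rw [← hpb, this]
      simp
  have hcf := matrix_solve (thomeeM q) N hNM c' d hrows
  have hdnorm : ∀ j : Fin (q+1), ‖d j‖ ≤ S := by
    intro j
    rw [hd]
    by_cases hj : (j : ℕ) < q
    · simp only [hj, if_true]
      have hb : ∀ s ∈ Set.uIoc (0:ℝ) 1, ‖s ^ (j : ℕ) • v (a + s * e)‖ ≤ S := by
        intro s hs
        rw [uIoc_of_le zero_le_one] at hs
        have hs' : s ∈ Icc (0:ℝ) 1 := ⟨hs.1.le, hs.2⟩
        rw [norm_smul]
        have h1 : ‖s ^ (j : ℕ)‖ ≤ 1 := by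
          rw [Real.norm_eq_abs, abs_pow]
          exact pow_le_one₀ (abs_nonneg _) (abs_le.mpr ⟨by linarith [hs'.1], hs'.2⟩)
        calc ‖s ^ (j : ℕ)‖ * ‖v (a + s * e)‖ ≤ 1 * S :=
              mul_le_mul h1 (hvle _ (hmem s hs')) (norm_nonneg _) zero_le_one
          _ = S := one_mul S
      have := intervalIntegral.norm_integral_le_of_norm_le_const hb
      simpa using this
    · simp only [hj, if_false]
      exact hvle b ⟨hab.le, le_rfl⟩
  refine ciSup_le fun t => ?_
  obtain ⟨t, ht⟩ := t
  show ‖p t‖ ≤ (K + 1) * S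
  set s : ℝ := (t - a) / e with hsdef
  have hs : s ∈ Icc (0:ℝ) 1 :=
    ⟨div_nonneg (by linarith [ht.1]) he.le, by rw [hsdef, div_le_one he]; linarith [ht.2]⟩
  have hts : a + s * e = t := by rw [hsdef]; field_simp; ring
  rw [← hts, hptil]
  calc ‖∑ k : Fin (q+1), s ^ (k : ℕ) • c' k‖
      ≤ ∑ k : Fin (q+1), ‖s ^ (k : ℕ) • c' k‖ := norm_sum_le _ _
    _ ≤ ∑ k : Fin (q+1), ‖c' k‖ := by
        refine Finset.sum_le_sum fun k _ => ?_
        rw [norm_smul]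
        refine mul_le_of_le_one_left (norm_nonneg _) ?_
        rw [Real.norm_eq_abs, abs_pow]
        exact pow_le_one₀ (abs_nonneg _) (abs_le.mpr ⟨by linarith [hs.1], hs.2⟩)
    _ ≤ ∑ k : Fin (q+1), ∑ j : Fin (q+1), |N k j| * S := by
        refine Finset.sum_le_sum fun k _ => ?_
        rw [hcf k]
        calc ‖∑ j : Fin (q+1), N k j • d j‖ ≤ ∑ j : Fin (q+1), ‖N k j • d j‖ :=
              norm_sum_le _ _
          _ ≤ ∑ j : Fin (q+1), |N k j| * S := by
              refine Finset.sum_le_sum fun j _ => ?_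
              rw [norm_smul, Real.norm_eq_abs]
              exact mul_le_mul_of_nonneg_left (hdnorm j) (abs_nonneg _)
    _ = K * S := by
        simp_rw [← Finset.sum_mul]; rw [hK]
    _ ≤ (K + 1) * S := by nlinarith
end

section
/- Let H be a real Hilbert space with inner product ⟨·,·⟩, let q ∈ ℕ, let a < b, and let v : [a,b] → H be continuous. Then there exists exactly one H-valued polynomial p of degree at most q such that p(b) = v(b) and ∫_a^b ⟨v(t) − p(t), w(t)⟩ dt = 0 for every H-valued polynomial w of degree at most q − 1 (the orthogonality condition being vacuous when q = 0). -/
open MeasureTheory Set RealInnerProductSpace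

namespace ThomeeAux

open Polynomial

noncomputable def mu (a b : ℝ) (k : ℕ) : ℝ := ∫ t in a..b, t ^ k

variable {q : ℕ} {a b : ℝ}

lemma kernel_zero (hab : a < b) (x : Fin (q + 1) → ℝ)
    (h1 : ∀ j : Fin q, ∑ i : Fin (q + 1), mu a b ((i : ℕ) + (j : ℕ)) * x i = 0)
    (h2 : ∑ i : Fin (q + 1), b ^ (i : ℕ) * x i = 0) : x = 0 := by
  classical
  set P : ℝ[X] := ∑ i : Fin (q + 1), C (x i) * X ^ (i : ℕ) with hP
  have hPeval : ∀ t : ℝ, P.eval t = ∑ i : Fin (q + 1), x i * t ^ (i : ℕ) := by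
    intro t; simp [hP, Polynomial.eval_finset_sum]
  have hPcoeff : ∀ i : Fin (q + 1), P.coeff (i : ℕ) = x i := by
    intro i
    rw [hP, Polynomial.finset_sum_coeff]
    rw [Finset.sum_congr rfl (fun j _ => by
      rw [Polynomial.coeff_C_mul, Polynomial.coeff_X_pow])]
    simp [Fin.val_inj]
  have hPdeg : P.natDegree ≤ q := by
    rw [hP]
    apply Polynomial.natDegree_sum_le_of_forall_le
    intro i _
    exact (Polynomial.natDegree_C_mul_X_pow_le (x i) (i : ℕ)).trans i.is_le
  have hOrtho : ∀ j : ℕ, j < q → (∫ t in a..b, t ^ j * P.eval t) = 0 := by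
    intro j hj
    have heq : ∀ t : ℝ, t ^ j * P.eval t
        = ∑ i : Fin (q + 1), x i * t ^ ((i : ℕ) + j) := by
      intro t
      rw [hPeval, Finset.mul_sum]
      exact Finset.sum_congr rfl fun i _ => by rw [pow_add]; ring
    rw [intervalIntegral.integral_congr (fun t _ => heq t),
      intervalIntegral.integral_finset_sum (fun i _ =>
        (Continuous.intervalIntegrable (by continuity) a b))]
    have := h1 ⟨j, hj⟩
    rw [← this]
    exact Finset.sum_congr rfl fun i _ => by
      rw [intervalIntegral.integral_const_mul, mu, mul_comm]
  have hOrthoPoly : ∀ S : ℝ[X], S.natDegree < q →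
      (∫ t in a..b, P.eval t * S.eval t) = 0 := by
    intro S hS
    have heq : ∀ t : ℝ, P.eval t * S.eval t
        = ∑ j ∈ Finset.range q, S.coeff j * (t ^ j * P.eval t) := by
      intro t
      rw [Polynomial.eval_eq_sum_range' hS, Finset.mul_sum]
      exact Finset.sum_congr rfl fun j _ => by ring
    rw [intervalIntegral.integral_congr (fun t _ => heq t),
      intervalIntegral.integral_finset_sum (fun j _ =>
        (Continuous.intervalIntegrable (by
          exact continuous_const.mul ((continuous_pow j).mul (Polynomial.continuous P))) a b))]
    apply Finset.sum_eq_zero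
    intro j hj
    rw [intervalIntegral.integral_const_mul, hOrtho j (Finset.mem_range.mp hj), mul_zero]
  have hroot : P.IsRoot b := by
    rw [Polynomial.IsRoot, hPeval, ← h2]
    exact Finset.sum_congr rfl fun i _ => mul_comm _ _
  set R : ℝ[X] := P /ₘ (X - C b) with hRdef
  have hfac : (X - C b) * R = P := Polynomial.mul_divByMonic_eq_iff_isRoot.mpr hroot
  have hR0 : R = 0 := by
    by_contra hR
    have hPne : P ≠ 0 := by
      intro h
      rw [h] at hfac
      rcases mul_eq_zero.mp hfac with h' | h'
      · exact Polynomial.X_sub_C_ne_zero b h'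
      · exact hR h'
    have hdegR : R.natDegree < q := by
      have hmul : ((X - C b) * R).natDegree = 1 + R.natDegree := by
        rw [Polynomial.natDegree_mul (Polynomial.X_sub_C_ne_zero b) hR,
          Polynomial.natDegree_X_sub_C]
      rw [hfac] at hmul
      omega
    have key : (∫ t in a..b, P.eval t * R.eval t) = 0 := hOrthoPoly R hdegR
    set g : ℝ → ℝ := fun t => (b - t) * R.eval t ^ 2 with hg
    have hgeq : ∀ t, g t = -(P.eval t * R.eval t) := by
      intro t
      have : P.eval t = (t - b) * R.eval t := by
        rw [← hfac]; simp
      rw [hg, this]; ring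
    have hgcont : Continuous g := by
      exact (continuous_const.sub continuous_id).mul ((Polynomial.continuous R).pow 2)
    have hgint0 : (∫ t in Ioc a b, g t) = 0 := by
      rw [← intervalIntegral.integral_of_le hab.le,
        intervalIntegral.integral_congr (fun t _ => hgeq t),
        intervalIntegral.integral_neg, key, neg_zero]
    have hgnn : 0 ≤ᵐ[volume.restrict (Ioc a b)] g := by
      rw [Filter.EventuallyLE, ae_restrict_iff' measurableSet_Ioc]
      refine ae_of_all _ fun t ht => ?_
      exact mul_nonneg (sub_nonneg.mpr ht.2) (sq_nonneg _)
    have hae : g =ᵐ[volume.restrict (Ioc a b)] 0 :=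
      (integral_eq_zero_iff_of_nonneg_ae hgnn (hgcont.integrableOn_Ioc)).mp hgint0
    have hnull : volume {t | t ∈ Ioc a b ∧ g t ≠ 0} = 0 := by
      have h := (ae_restrict_iff' measurableSet_Ioc).mp hae
      rw [ae_iff] at h
      refine measure_mono_null (fun t ht => ?_) h
      simp only [mem_setOf_eq, Pi.zero_apply] at *
      exact fun himp => ht.2 (himp ht.1)
    have hsub : Ioo a b ⊆ {t : ℝ | R.IsRoot t} ∪ {t | t ∈ Ioc a b ∧ g t ≠ 0} := by
      intro t ht
      by_cases hgt : g t = 0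
      · left
        rcases mul_eq_zero.mp hgt with h' | h'
        · exact absurd h' (by simp [sub_ne_zero]; exact ne_of_gt ht.2)
        · exact pow_eq_zero_iff (n := 2) (by norm_num) |>.mp h'
      · right; exact ⟨⟨ht.1, ht.2.le⟩, hgt⟩
    have hroots : volume {t : ℝ | R.IsRoot t} = 0 :=
      (Polynomial.finite_setOf_isRoot hR).measure_zero _
    have : volume (Ioo a b) = 0 := by
      refine le_antisymm ?_ zero_le
      calc volume (Ioo a b) ≤ volume ({t : ℝ | R.IsRoot t} ∪ {t | t ∈ Ioc a b ∧ g t ≠ 0}) :=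
            measure_mono hsub
        _ ≤ volume {t : ℝ | R.IsRoot t} + volume {t | t ∈ Ioc a b ∧ g t ≠ 0} :=
            measure_union_le _ _
        _ = 0 := by rw [hroots, hnull, add_zero]
    rw [Real.volume_Ioo] at this
    exact absurd this (by simp [sub_pos.mpr hab]; linarith)
  have hPzero : P = 0 := by rw [← hfac, hR0, mul_zero]
  funext i
  rw [← hPcoeff i, hPzero, Polynomial.coeff_zero]; rfl



noncomputable def Mmat (q : ℕ) (a b : ℝ) : Matrix (Fin (q + 1)) (Fin (q + 1)) ℝ :=
  Matrix.of fun j i => if (j : ℕ) < q then mu a b ((i : ℕ) + (j : ℕ)) else b ^ (i : ℕ)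

lemma det_ne (q : ℕ) (hab : a < b) : (Mmat q a b).det ≠ 0 := by
  classical
  intro hdet
  obtain ⟨x, hx0, hx⟩ := Matrix.exists_mulVec_eq_zero_iff.mpr hdet
  refine hx0 (kernel_zero hab x ?_ ?_)
  · intro j
    have := congrFun hx ⟨(j : ℕ), j.2.trans (Nat.lt_succ_self q)⟩
    simpa [Matrix.mulVec, dotProduct, Mmat, j.2] using this
  · have := congrFun hx (Fin.last q)
    simpa [Matrix.mulVec, dotProduct, Mmat, Fin.last] using this

lemma mat_smul {n : ℕ} {H : Type*} [AddCommGroup H] [Module ℝ H]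
    (A B : Matrix (Fin n) (Fin n) ℝ) (hAB : A * B = 1) (y : Fin n → H) (i : Fin n) :
    ∑ j, A i j • ∑ k, B j k • y k = y i := by
  classical
  calc ∑ j, A i j • ∑ k, B j k • y k
      = ∑ j, ∑ k, (A i j * B j k) • y k := by
        simp [Finset.smul_sum, smul_smul]
    _ = ∑ k, (∑ j, A i j * B j k) • y k := by
        rw [Finset.sum_comm]
        exact Finset.sum_congr rfl fun k _ => (Finset.sum_smul).symm
    _ = ∑ k, (A * B) i k • y k := by
        simp [Matrix.mul_apply]
    _ = y i := by
        rw [hAB]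
        simp [Matrix.one_apply]



variable {H : Type*} [NormedAddCommGroup H] [InnerProductSpace ℝ H] [CompleteSpace H]

lemma integral_poly_smul (c : Fin (q + 1) → H) (j : ℕ) :
    (∫ t in a..b, t ^ j • ∑ i : Fin (q + 1), t ^ (i : ℕ) • c i)
      = ∑ i : Fin (q + 1), mu a b ((i : ℕ) + j) • c i := by
  have heq : ∀ t ∈ uIcc a b, t ^ j • ∑ i : Fin (q + 1), t ^ (i : ℕ) • c i
      = ∑ i : Fin (q + 1), t ^ ((i : ℕ) + j) • c i := by
    intro t _
    rw [Finset.smul_sum]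
    exact Finset.sum_congr rfl fun i _ => by
      rw [smul_smul, ← pow_add, add_comm]
  rw [intervalIntegral.integral_congr heq,
    intervalIntegral.integral_finset_sum (f := fun (i : Fin (q + 1)) t => t ^ ((i : ℕ) + j) • c i) (fun i _ =>
      ((continuous_pow _).smul continuous_const).intervalIntegrable a b)]
  exact Finset.sum_congr rfl fun i _ => intervalIntegral.integral_smul_const _ _

lemma integral_inner_right {f : ℝ → H} (hf : IntervalIntegrable f volume a b) (h : H) :
    (∫ t in a..b, ⟪f t, h⟫) = ⟪∫ t in a..b, f t, h⟫ := by
  have h1 : (∫ t in a..b, ⟪h, f t⟫) = ⟪h, ∫ t in a..b, f t⟫ := by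
    simpa using (innerSL ℝ h).intervalIntegral_comp_comm hf
  rw [real_inner_comm h (∫ t in a..b, f t), ← h1]
  exact intervalIntegral.integral_congr fun t _ => real_inner_comm h (f t)

end ThomeeAux

/-- **Well-posedness of the Thomée projection.** For every continuous `v : [a,b] → H` there
exists exactly one polynomial `p` of degree at most `q` with `p(b) = v(b)` such that `v − p`
is `L²((a,b);H)`-orthogonal to all polynomials of degree at most `q − 1`. -/
theorem thomee_projection_existence_uniqueness (H : Type*) [NormedAddCommGroup H]
    [InnerProductSpace ℝ H] [CompleteSpace H] (q : ℕ) (a b : ℝ) (hab : a < b)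
    (v : ℝ → H) (hv : ContinuousOn v (Icc a b)) :
    ∃! p : ℝ → H, IsPolyDegLE H q p ∧ p b = v b ∧
      ∀ w : ℝ → H, IsPolyDegLT H q w → (∫ t in a..b, ⟪v t - p t, w t⟫) = 0 := by
  classical
  have hab' : a ≤ b := hab.le
  set M := ThomeeAux.Mmat q a b with hMdef
  have hdet : M.det ≠ 0 := ThomeeAux.det_ne q hab
  have hMN : M * M⁻¹ = 1 := Matrix.mul_nonsing_inv M (isUnit_iff_ne_zero.mpr hdet)
  have hNM : M⁻¹ * M = 1 := Matrix.nonsing_inv_mul M (isUnit_iff_ne_zero.mpr hdet)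
  have hInt : ∀ (u : ℝ → H), ContinuousOn u (Icc a b) → ∀ j : ℕ,
      IntervalIntegrable (fun t => t ^ j • u t) volume a b := by
    intro u hu j
    apply ContinuousOn.intervalIntegrable
    rw [uIcc_of_le hab']
    exact (continuous_pow j).continuousOn.smul hu
  set d : Fin (q + 1) → H := fun j =>
    if (j : ℕ) < q then ∫ t in a..b, t ^ (j : ℕ) • v t else v b with hd
  set c : Fin (q + 1) → H := fun i => ∑ j, (M⁻¹) i j • d j with hc
  set p : ℝ → H := fun t => ∑ i : Fin (q + 1), t ^ (i : ℕ) • c i with hp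
  have hpc : Continuous p := by
    rw [hp]
    exact continuous_finset_sum _ fun i _ => (continuous_pow _).smul continuous_const
  have hMc : ∀ j, ∑ i, M j i • c i = d j := fun j => ThomeeAux.mat_smul M M⁻¹ hMN d j
  have hMentry : ∀ (j : Fin (q + 1)), (j : ℕ) < q → ∀ i,
      M j i = ThomeeAux.mu a b ((i : ℕ) + (j : ℕ)) := by
    intro j hj i; simp [hMdef, ThomeeAux.Mmat, hj]
  have hMlast : ∀ (j : Fin (q + 1)), ¬ (j : ℕ) < q → ∀ i, M j i = b ^ (i : ℕ) := by
    intro j hj i; simp [hMdef, ThomeeAux.Mmat, hj]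
  have hintp : ∀ j : Fin q, (∫ t in a..b, t ^ (j : ℕ) • p t)
      = d ⟨(j : ℕ), j.2.trans (Nat.lt_succ_self q)⟩ := by
    intro j
    rw [show (∫ t in a..b, t ^ (j : ℕ) • p t)
        = ∫ t in a..b, t ^ (j : ℕ) • ∑ i : Fin (q + 1), t ^ (i : ℕ) • c i from rfl,
      ThomeeAux.integral_poly_smul, ← hMc ⟨(j : ℕ), j.2.trans (Nat.lt_succ_self q)⟩]
    exact Finset.sum_congr rfl fun i _ => by
      rw [hMentry ⟨(j : ℕ), j.2.trans (Nat.lt_succ_self q)⟩ j.2 i]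
  have hintv : ∀ j : Fin q, (∫ t in a..b, t ^ (j : ℕ) • v t)
      = d ⟨(j : ℕ), j.2.trans (Nat.lt_succ_self q)⟩ := by
    intro j
    rw [hd]
    simp only []
    rw [if_pos j.2]
  have hkey : ∀ j : Fin q, (∫ t in a..b, t ^ (j : ℕ) • (v t - p t)) = 0 := by
    intro j
    have heq : ∀ t ∈ uIcc a b, t ^ (j : ℕ) • (v t - p t)
        = t ^ (j : ℕ) • v t - t ^ (j : ℕ) • p t := fun t _ => smul_sub _ _ _
    rw [intervalIntegral.integral_congr heq,
      intervalIntegral.integral_sub (hInt v hv _) (hInt p hpc.continuousOn _),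
      hintp j, hintv j, sub_self]
  have hpb : p b = v b := by
    have hlast := hMc (Fin.last q)
    rw [show p b = ∑ i : Fin (q + 1), b ^ (i : ℕ) • c i from rfl]
    calc ∑ i : Fin (q + 1), b ^ (i : ℕ) • c i
        = ∑ i, M (Fin.last q) i • c i :=
          Finset.sum_congr rfl fun i _ => by
            rw [hMlast (Fin.last q) (by simp [Fin.last]) i]
      _ = d (Fin.last q) := hMc _
      _ = v b := by rw [hd]; simp [Fin.last]
  have hortho : ∀ w : ℝ → H, IsPolyDegLT H q w →
      (∫ t in a..b, ⟪v t - p t, w t⟫) = 0 := by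
    rintro w ⟨e, he⟩
    have heq : ∀ t ∈ uIcc a b, ⟪v t - p t, w t⟫
        = ∑ j : Fin q, ⟪t ^ (j : ℕ) • (v t - p t), e j⟫ := by
      intro t _
      rw [he t, inner_sum]
      exact Finset.sum_congr rfl fun j _ => by
        rw [real_inner_smul_right, real_inner_smul_left]
    have hint : ∀ j : Fin q,
        IntervalIntegrable (fun t => ⟪t ^ (j : ℕ) • (v t - p t), e j⟫) volume a b := by
      intro j
      apply ContinuousOn.intervalIntegrable
      rw [uIcc_of_le hab']
      exact ((continuous_pow _).continuousOn.smul (hv.sub hpc.continuousOn)).inner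
        continuousOn_const
    rw [intervalIntegral.integral_congr heq,
      intervalIntegral.integral_finset_sum (fun j _ => hint j)]
    refine Finset.sum_eq_zero fun j _ => ?_
    rw [ThomeeAux.integral_inner_right (f := fun t => t ^ (j : ℕ) • (v t - p t)) (hInt _ (hv.sub hpc.continuousOn) _) (e j),
      hkey j, inner_zero_left]
  refine ⟨p, ⟨⟨c, fun t => rfl⟩, hpb, hortho⟩, ?_⟩
  rintro p₂ ⟨⟨c₂, hc₂⟩, hb₂, ho₂⟩
  have hp₂c : Continuous p₂ := by
    have : p₂ = fun t => ∑ i : Fin (q + 1), t ^ (i : ℕ) • c₂ i := funext hc₂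
    rw [this]
    exact continuous_finset_sum _ fun i _ => (continuous_pow _).smul continuous_const
  set e : Fin (q + 1) → H := fun i => c₂ i - c i with hedef
  have hδ : ∀ t, p₂ t - p t = ∑ i : Fin (q + 1), t ^ (i : ℕ) • e i := by
    intro t
    rw [hc₂ t, show p t = ∑ i : Fin (q + 1), t ^ (i : ℕ) • c i from rfl,
      ← Finset.sum_sub_distrib]
    exact Finset.sum_congr rfl fun i _ => (smul_sub _ _ _).symm
  have hmono : ∀ (j : Fin q) (h : H),
      (∫ t in a..b, ⟪p₂ t - p t, t ^ (j : ℕ) • h⟫) = 0 := by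
    intro j h
    have hw : IsPolyDegLT H q (fun t => t ^ (j : ℕ) • h) := by
      refine ⟨Pi.single j h, fun t => ?_⟩
      simp [Pi.single_apply, smul_ite, Finset.sum_ite_eq']
    have h1 := hortho _ hw
    have h2 := ho₂ _ hw
    have hint1 : IntervalIntegrable (fun t => ⟪v t - p t, t ^ (j : ℕ) • h⟫) volume a b := by
      apply ContinuousOn.intervalIntegrable
      rw [uIcc_of_le hab']
      exact (hv.sub hpc.continuousOn).inner
        ((continuous_pow _).continuousOn.smul continuousOn_const)
    have hint2 : IntervalIntegrable (fun t => ⟪v t - p₂ t, t ^ (j : ℕ) • h⟫) volume a b := by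
      apply ContinuousOn.intervalIntegrable
      rw [uIcc_of_le hab']
      exact (hv.sub hp₂c.continuousOn).inner
        ((continuous_pow _).continuousOn.smul continuousOn_const)
    have heq : ∀ t ∈ uIcc a b, ⟪p₂ t - p t, t ^ (j : ℕ) • h⟫
        = ⟪v t - p t, t ^ (j : ℕ) • h⟫ - ⟪v t - p₂ t, t ^ (j : ℕ) • h⟫ := by
      intro t _
      rw [← inner_sub_left]
      congr 1
      abel
    rw [intervalIntegral.integral_congr heq,
      intervalIntegral.integral_sub hint1 hint2, h1, h2, sub_self]
  have hz : ∀ j : Fin (q + 1), ∑ i, M j i • e i = 0 := by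
    intro j
    by_cases hj : (j : ℕ) < q
    · have hintδ : IntervalIntegrable (fun t => t ^ (j : ℕ) • (p₂ t - p t)) volume a b :=
        hInt _ (hp₂c.continuousOn.sub hpc.continuousOn) _
      have hval : (∫ t in a..b, t ^ (j : ℕ) • (p₂ t - p t)) = ∑ i, M j i • e i := by
        rw [intervalIntegral.integral_congr
            (fun t (_ : t ∈ uIcc a b) => by rw [hδ t]),
          ThomeeAux.integral_poly_smul]
        exact Finset.sum_congr rfl fun i _ => by rw [hMentry j hj i]
      have hz' : ∀ h : H, ⟪∑ i, M j i • e i, h⟫ = 0 := by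
        intro h
        have hm := hmono ⟨(j : ℕ), hj⟩ h
        rw [intervalIntegral.integral_congr (fun t (_ : t ∈ uIcc a b) => by
          rw [real_inner_smul_right, ← real_inner_smul_left])] at hm
        rw [ThomeeAux.integral_inner_right hintδ h] at hm
        rw [← hval]
        exact hm
      have := hz' (∑ i, M j i • e i)
      exact inner_self_eq_zero.mp this
    · calc ∑ i, M j i • e i = ∑ i : Fin (q + 1), b ^ (i : ℕ) • e i :=
            Finset.sum_congr rfl fun i _ => by rw [hMlast j hj i]
        _ = p₂ b - p b := (hδ b).symm
        _ = 0 := by rw [hb₂, hpb, sub_self]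
  have he0 : ∀ i, e i = 0 := by
    intro i
    have h := ThomeeAux.mat_smul (M⁻¹) M hNM e i
    rw [Finset.sum_congr rfl (fun j _ => by rw [hz j, smul_zero])] at h
    rw [← h, Finset.sum_const_zero]
  funext t
  have h := hδ t
  rw [Finset.sum_congr rfl (fun i _ => by rw [he0 i, smul_zero]),
    Finset.sum_const_zero] at h
  exact sub_eq_zero.mp h
end

section
/- Let H be a real Hilbert space with inner product ⟨·,·⟩, let q ∈ ℕ, and let 0 = t_0 < t_1 < … < t_N = T be a partition of [0,T], with I_n = (t_{n−1}, t_n). Let v : [0,T] → H be continuously differentiable. For each n ∈ {1,…,N}, let p_n be an H-valued polynomial of degree at most q with p_n(t_n) = v(t_n) and ∫_{I_n} ⟨v(t) − p_n(t), w(t)⟩ dt = 0 for every H-valued polynomial w of degree at most q − 1. Then for every family w_1, …, w_N of H-valued polynomials of degree at most q, Σ_{n=1}^{N} ∫_{I_n} ⟨p_n'(t), w_n(t)⟩ dt + Σ_{n=1}^{N−1} ⟨p_{n+1}(t_n) − p_n(t_n), w_{n+1}(t_n)⟩ + ⟨p_1(0), w_1(0)⟩ = Σ_{n=1}^{N} ∫_{I_n}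 ⟨v'(t), w_n(t)⟩ dt + ⟨v(0), w_1(0)⟩. -/
open MeasureTheory Set RealInnerProductSpace

section Aux
variable {H : Type*} [NormedAddCommGroup H] [InnerProductSpace ℝ H]

lemma polyAux_hasDerivAt {q : ℕ} (c : Fin (q + 1) → H) (x : ℝ) :
    HasDerivAt (fun s => ∑ i : Fin (q + 1), s ^ (i : ℕ) • c i)
      (∑ j : Fin q, x ^ (j : ℕ) • ((((j : ℕ) : ℝ) + 1) • c j.succ)) x := by
  have h : HasDerivAt (fun s => ∑ i : Fin (q + 1), s ^ (i : ℕ) • c i)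
      (∑ i : Fin (q + 1), (((i : ℕ) : ℝ) * x ^ ((i : ℕ) - 1)) • c i) x := by
    refine HasDerivAt.fun_sum fun i _ => ?_
    simpa using (hasDerivAt_pow (i : ℕ) x).smul_const (c i)
  convert h using 1
  rw [Fin.sum_univ_succ]
  simp [Fin.val_succ, smul_smul, mul_comm, add_comm]

lemma polyAux_continuous {q : ℕ} (c : Fin q → H) :
    Continuous (fun s : ℝ => ∑ i : Fin q, s ^ (i : ℕ) • c i) :=
  continuous_finset_sum _ fun i _ => (continuous_pow _).smul continuous_const

lemma thomee_key [CompleteSpace H] {q : ℕ} {a b T : ℝ} (hab : a ≤ b) (ha : 0 ≤ a)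
    (hbT : b ≤ T) (hT : 0 < T)
    {v p w : ℝ → H} (hv : ContDiffOn ℝ 1 v (Icc 0 T))
    (hp : IsPolyDegLE H q p) (hw : IsPolyDegLE H q w)
    (hinterp : p b = v b)
    (horth : ∀ u : ℝ → H, IsPolyDegLT H q u → (∫ s in a..b, ⟪v s - p s, u s⟫) = 0) :
    (∫ s in a..b, ⟪deriv p s, w s⟫)
      = (∫ s in a..b, ⟪derivWithin v (Icc 0 T) s, w s⟫)
        + ⟪v a - p a, w a⟫ := by
  obtain ⟨cp, hcp⟩ := hp
  obtain ⟨cw, hcw⟩ := hw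
  set Dp : ℝ → H := fun x => ∑ j : Fin q, x ^ (j : ℕ) • ((((j : ℕ) : ℝ) + 1) • cp j.succ)
    with hDpdef
  set Dw : ℝ → H := fun x => ∑ j : Fin q, x ^ (j : ℕ) • ((((j : ℕ) : ℝ) + 1) • cw j.succ)
    with hDwdef
  have hpe : p = fun s => ∑ i : Fin (q + 1), s ^ (i : ℕ) • cp i := funext hcp
  have hwe : w = fun s => ∑ i : Fin (q + 1), s ^ (i : ℕ) • cw i := funext hcw
  have hpd : ∀ x, HasDerivAt p (Dp x) x := fun x => by
    rw [hpe]; exact polyAux_hasDerivAt cp x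
  have hwd : ∀ x, HasDerivAt w (Dw x) x := fun x => by
    rw [hwe]; exact polyAux_hasDerivAt cw x
  have hpc : Continuous p := by rw [hpe]; exact polyAux_continuous cp
  have hwc : Continuous w := by rw [hwe]; exact polyAux_continuous cw
  have hDpc : Continuous Dp := polyAux_continuous _
  have hDwc : Continuous Dw := polyAux_continuous _
  set Dv : ℝ → H := derivWithin v (Icc 0 T) with hDvdef
  have hsub : Icc a b ⊆ Icc (0 : ℝ) T := Icc_subset_Icc ha hbT
  have hDvc : ContinuousOn Dv (Icc a b) :=
    (hv.continuousOn_derivWithin (uniqueDiffOn_Icc hT) le_rfl).mono hsub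
  have hvc : ContinuousOn v (Icc a b) := hv.continuousOn.mono hsub
  -- derivative of the inner product on the open interval
  have hderiv : ∀ x ∈ Ioo a b, HasDerivAt (fun s => ⟪v s - p s, w s⟫)
      (⟪v x - p x, Dw x⟫ + ⟪Dv x - Dp x, w x⟫) x := by
    intro x hx
    have hx0T : x ∈ Ioo (0 : ℝ) T := ⟨lt_of_le_of_lt ha hx.1, lt_of_lt_of_le hx.2 hbT⟩
    have hmem : Icc (0 : ℝ) T ∈ nhds x := Icc_mem_nhds hx0T.1 hx0T.2
    have hvdiff : DifferentiableWithinAt ℝ v (Icc 0 T) x :=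
      (hv.differentiableOn one_ne_zero) x (Ioo_subset_Icc_self hx0T)
    have hvat : HasDerivAt v (Dv x) x := by
      rw [hDvdef, derivWithin_of_mem_nhds hmem]
      exact (hvdiff.differentiableAt hmem).hasDerivAt
    exact HasDerivAt.inner ℝ ((hvat).sub (hpd x)) (hwd x)
  -- continuity / integrability of the pieces
  have hc1 : ContinuousOn (fun x => ⟪v x - p x, Dw x⟫) (Icc a b) :=
    ContinuousOn.inner (hvc.sub hpc.continuousOn) hDwc.continuousOn
  have hc2 : ContinuousOn (fun x => ⟪Dv x - Dp x, w x⟫) (Icc a b) :=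
    ContinuousOn.inner (hDvc.sub hDpc.continuousOn) hwc.continuousOn
  have hi1 : IntervalIntegrable (fun x => ⟪v x - p x, Dw x⟫) volume a b := by
    apply ContinuousOn.intervalIntegrable; rwa [uIcc_of_le hab]
  have hi2 : IntervalIntegrable (fun x => ⟪Dv x - Dp x, w x⟫) volume a b := by
    apply ContinuousOn.intervalIntegrable; rwa [uIcc_of_le hab]
  have hiDv : IntervalIntegrable (fun x => ⟪Dv x, w x⟫) volume a b := by
    apply ContinuousOn.intervalIntegrable
    rw [uIcc_of_le hab]; exact ContinuousOn.inner hDvc hwc.continuousOn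
  have hiDp : IntervalIntegrable (fun x => ⟪Dp x, w x⟫) volume a b := by
    apply ContinuousOn.intervalIntegrable
    rw [uIcc_of_le hab]; exact ContinuousOn.inner hDpc.continuousOn hwc.continuousOn
  -- FTC
  have hftc : (∫ x in a..b, (⟪v x - p x, Dw x⟫ + ⟪Dv x - Dp x, w x⟫))
      = ⟪v b - p b, w b⟫ - ⟪v a - p a, w a⟫ := by
    exact intervalIntegral.integral_eq_sub_of_hasDerivAt_of_le hab
      (ContinuousOn.inner (hvc.sub hpc.continuousOn) hwc.continuousOn) hderiv
      (hi1.add hi2)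
  rw [intervalIntegral.integral_add hi1 hi2] at hftc
  have ho : (∫ x in a..b, ⟪v x - p x, Dw x⟫) = 0 :=
    horth Dw ⟨fun j => (((j : ℕ) : ℝ) + 1) • cw j.succ, fun _ => rfl⟩
  have hsplit : (∫ x in a..b, ⟪Dv x - Dp x, w x⟫)
      = (∫ x in a..b, ⟪Dv x, w x⟫) - (∫ x in a..b, ⟪Dp x, w x⟫) := by
    rw [← intervalIntegral.integral_sub hiDv hiDp]
    exact intervalIntegral.integral_congr fun x _ => inner_sub_left _ _ _
  have hz : ⟪v b - p b, w b⟫ = 0 := by rw [hinterp, sub_self, inner_zero_left]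
  have hDpint : (∫ s in a..b, ⟪deriv p s, w s⟫) = ∫ s in a..b, ⟪Dp s, w s⟫ :=
    intervalIntegral.integral_congr fun x _ => by rw [(hpd x).deriv]
  rw [hDpint]
  rw [ho, hsplit, hz] at hftc
  linarith

end Aux

/-- **Orthogonality of the intervalwise Thomée projection for the DG time derivative.**
Let `0 = t_0 < … < t_N = T`, let `v` be `C¹` on `[0,T]` and let `p_n` be the Thomée
projection of `v` on `(t_{n−1}, t_n)` (right-endpoint interpolation, `L²`-orthogonality of
`v − p_n` to degree `≤ q − 1`). Then for all polynomial test functions `w_n` of degree `≤ q`,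
`∑_n ∫_{I_n} ⟨p_n', w_n⟩ + ∑_{n=1}^{N−1} ⟨p_{n+1}(t_n) − p_n(t_n), w_{n+1}(t_n)⟩ + ⟨p_1(0), w_1(0)⟩
  = ∑_n ∫_{I_n} ⟨v', w_n⟩ + ⟨v(0), w_1(0)⟩`. -/
theorem thomee_dg_orthogonality (H : Type*) [NormedAddCommGroup H] [InnerProductSpace ℝ H]
    [CompleteSpace H] (q N : ℕ) (hN : 1 ≤ N) (T : ℝ)
    (t : ℕ → ℝ) (ht0 : t 0 = 0) (htN : t N = T) (hmono : ∀ n < N, t n < t (n + 1))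
    (v : ℝ → H) (hv : ContDiffOn ℝ 1 v (Icc (0 : ℝ) T))
    (p : ℕ → ℝ → H)
    (hppoly : ∀ n ∈ Finset.Icc 1 N, IsPolyDegLE H q (p n))
    (hinterp : ∀ n ∈ Finset.Icc 1 N, p n (t n) = v (t n))
    (horth : ∀ n ∈ Finset.Icc 1 N, ∀ w : ℝ → H, IsPolyDegLT H q w →
      (∫ s in t (n - 1)..t n, ⟪v s - p n s, w s⟫) = 0)
    (w : ℕ → ℝ → H) (hw : ∀ n ∈ Finset.Icc 1 N, IsPolyDegLE H q (w n)) :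
    (∑ n ∈ Finset.Icc 1 N, ∫ s in t (n - 1)..t n, ⟪deriv (p n) s, w n s⟫)
      + (∑ n ∈ Finset.Icc 1 (N - 1), ⟪p (n + 1) (t n) - p n (t n), w (n + 1) (t n)⟫)
      + ⟪p 1 0, w 1 0⟫
    = (∑ n ∈ Finset.Icc 1 N, ∫ s in t (n - 1)..t n, ⟪derivWithin v (Icc (0 : ℝ) T) s, w n s⟫)
      + ⟪v 0, w 1 0⟫ := by
  have hle : ∀ m n : ℕ, m ≤ n → n ≤ N → t m ≤ t n := by
    intro m n hmn hnN
    induction n, hmn using Nat.le_induction with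
    | base => exact le_rfl
    | succ n hmn ih => exact (ih (by omega)).trans (hmono n (by omega)).le
  have hT : 0 < T := by
    have h1 := hmono 0 (by omega)
    have h2 := hle 1 N hN le_rfl
    rw [← htN, ← ht0]; linarith
  have hkey : ∀ n ∈ Finset.Icc 1 N,
      (∫ s in t (n - 1)..t n, ⟪deriv (p n) s, w n s⟫)
        = (∫ s in t (n - 1)..t n, ⟪derivWithin v (Icc (0 : ℝ) T) s, w n s⟫)
          + ⟪v (t (n - 1)) - p n (t (n - 1)), w n (t (n - 1))⟫ := by
    intro n hn
    have hn' := Finset.mem_Icc.mp hn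
    have hab : t (n - 1) ≤ t n := by
      have h := hmono (n - 1) (by omega)
      rw [show n - 1 + 1 = n by omega] at h
      exact h.le
    have ha : 0 ≤ t (n - 1) := ht0 ▸ hle 0 (n - 1) (by omega) (by omega)
    have hbT : t n ≤ T := htN ▸ hle n N hn'.2 le_rfl
    exact thomee_key hab ha hbT hT hv (hppoly n hn) (hw n hn) (hinterp n hn) (horth n hn)
  rw [Finset.sum_congr rfl hkey, Finset.sum_add_distrib]
  have hsplit : Finset.Icc 1 N = insert 1 (Finset.Icc 2 N) := by
    ext x; simp only [Finset.mem_insert, Finset.mem_Icc]; omega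
  have hS : (∑ n ∈ Finset.Icc 1 N, ⟪v (t (n - 1)) - p n (t (n - 1)), w n (t (n - 1))⟫)
      = ⟪v 0, w 1 0⟫ - ⟪p 1 0, w 1 0⟫
        - ∑ n ∈ Finset.Icc 1 (N - 1), ⟪p (n + 1) (t n) - p n (t n), w (n + 1) (t n)⟫ := by
    rw [hsplit, Finset.sum_insert (by simp)]
    have hmap : Finset.Icc 2 N = (Finset.Icc 1 (N - 1)).map ⟨(· + 1), add_left_injective 1⟩ := by
      ext x
      simp only [Finset.mem_map, Finset.mem_Icc, Function.Embedding.coeFn_mk]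
      constructor
      · intro hx; exact ⟨x - 1, by omega, by omega⟩
      · rintro ⟨m, hm, rfl⟩; omega
    rw [hmap, Finset.sum_map]
    simp only [Function.Embedding.coeFn_mk, Nat.add_sub_cancel]
    have hterm : ∀ m ∈ Finset.Icc 1 (N - 1),
        ⟪v (t m) - p (m + 1) (t m), w (m + 1) (t m)⟫
          = -⟪p (m + 1) (t m) - p m (t m), w (m + 1) (t m)⟫ := by
      intro m hm
      have hm' := Finset.mem_Icc.mp hm
      rw [← hinterp m (Finset.mem_Icc.mpr ⟨hm'.1, by omega⟩),
        show p m (t m) - p (m + 1) (t m) = -(p (m + 1) (t m) - p m (t m)) from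
          (neg_sub _ _).symm, inner_neg_left]
    rw [Finset.sum_congr rfl hterm, ht0, inner_sub_left]
    simp [Finset.sum_neg_distrib]
    ring
  rw [hS]
  ring
end

section
/- Let H be a real Hilbert space with inner product ⟨·,·⟩, let q ≥ 1 be an integer, and let 0 = t_0 < t_1 < … < t_N = T be a partition of [0,T]. Let v : [0,T] → H be continuously differentiable, and let p : [0,T] → H be a continuous function whose restriction to each [t_{n−1}, t_n] agrees with an H-valued polynomial of degree at most q, such that p(0) = v(0) and, for every n ∈ {1,…,N}, ∫_{t_{n−1}}^{t_n} ⟨v'(t) − p'(t), w(t)⟩ dt = 0 for every H-valued polynomial w of degree at most q − 1. Then p(t_n) = v(t_n) for every n ∈ {0, 1, …, N}. -/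
open MeasureTheory Set RealInnerProductSpace

lemma poly_hasDerivAt {H : Type*} [NormedAddCommGroup H] [NormedSpace ℝ H]
    {m : ℕ} (c : Fin m → H) (x : ℝ) :
    HasDerivAt (fun t : ℝ => ∑ i : Fin m, t ^ (i : ℕ) • c i)
      (∑ i : Fin m, (((i : ℕ) : ℝ) * x ^ ((i : ℕ) - 1)) • c i) x := by
  apply HasDerivAt.fun_sum
  intro i _
  exact (hasDerivAt_pow (i : ℕ) x).smul_const (c i)

/-- **Nodal exactness of the Aziz–Monk projection.** Let `0 = t_0 < … < t_N = T`, let `v` be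
`C¹` on `[0,T]`, and let `p` be a continuous function on `[0,T]` agreeing on each
`[t_{n−1}, t_n]` with a polynomial `P n` of degree at most `q`, such that `p(0) = v(0)` and,
on each interval, `v' − p'` is `L²`-orthogonal to polynomials of degree at most `q − 1`.
Then `p(t_n) = v(t_n)` for every node `t_n`. -/
theorem aziz_monk_nodal_exactness (H : Type*) [NormedAddCommGroup H] [InnerProductSpace ℝ H]
    [CompleteSpace H] (q N : ℕ) (hq : 1 ≤ q) (hN : 1 ≤ N) (T : ℝ)
    (t : ℕ → ℝ) (ht0 : t 0 = 0) (htN : t N = T) (hmono : ∀ n < N, t n < t (n + 1))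
    (v : ℝ → H) (hv : ContDiffOn ℝ 1 v (Icc (0 : ℝ) T))
    (p : ℝ → H) (hpc : ContinuousOn p (Icc (0 : ℝ) T))
    (P : ℕ → ℝ → H)
    (hPpoly : ∀ n ∈ Finset.Icc 1 N, IsPolyDegLE H q (P n))
    (hagree : ∀ n ∈ Finset.Icc 1 N, ∀ s ∈ Icc (t (n - 1)) (t n), p s = P n s)
    (hp0 : p 0 = v 0)
    (horth : ∀ n ∈ Finset.Icc 1 N, ∀ w : ℝ → H, IsPolyDegLT H q w →
      (∫ s in t (n - 1)..t n, ⟪derivWithin v (Icc (0 : ℝ) T) s - deriv (P n) s, w s⟫) = 0) :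
    ∀ n ≤ N, p (t n) = v (t n) := by
  -- monotonicity of the nodes
  have hmono' : ∀ i j, i ≤ j → j ≤ N → t i ≤ t j := by
    intro i j hij hjN
    induction j with
    | zero => simp_all
    | succ k ih =>
      rcases Nat.lt_or_ge i (k + 1) with h | h
      · exact le_trans (ih (Nat.lt_succ_iff.mp h) (le_trans (Nat.le_succ k) hjN))
          (le_of_lt (hmono k (Nat.lt_of_succ_le hjN)))
      · have : i = k + 1 := le_antisymm hij h
        simp [this]
  have hrange : ∀ k ≤ N, t k ∈ Icc (0 : ℝ) T := by
    intro k hk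
    constructor
    · rw [← ht0]; exact hmono' 0 k (Nat.zero_le _) hk
    · rw [← htN]; exact hmono' k N hk le_rfl
  -- continuity of the derivative of v
  have hvd : ContinuousOn (derivWithin v (Icc (0 : ℝ) T)) (Icc (0 : ℝ) T) :=
    hv.continuousOn_derivWithin (uniqueDiffOn_Icc (by
      rw [← ht0, ← htN]
      exact lt_of_lt_of_le (hmono 0 hN) (hmono' 1 N hN le_rfl))) le_rfl
  -- main induction
  intro n hn
  induction n with
  | zero => rw [ht0, hp0]
  | succ m ih =>
    have hmN : m < N := Nat.lt_of_succ_le hn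
    have hmem : m + 1 ∈ Finset.Icc 1 N := Finset.mem_Icc.mpr ⟨Nat.succ_le_succ (Nat.zero_le m), hn⟩
    obtain ⟨c, hc⟩ := hPpoly (m + 1) hmem
    have hPfun : P (m + 1) = fun s => ∑ i : Fin (q + 1), s ^ (i : ℕ) • c i := funext hc
    set a := t m with ha
    set b := t (m + 1) with hb
    have hab : a ≤ b := le_of_lt (hmono m hmN)
    have haI : a ∈ Icc (0 : ℝ) T := hrange m (le_of_lt hmN)
    have hbI : b ∈ Icc (0 : ℝ) T := hrange (m + 1) hn
    have hsub : Icc a b ⊆ Icc (0 : ℝ) T := Icc_subset_Icc haI.1 hbI.2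
    -- derivative of P (m+1)
    set Pd : ℝ → H := fun x => ∑ i : Fin (q + 1), (((i : ℕ) : ℝ) * x ^ ((i : ℕ) - 1)) • c i
      with hPd
    have hPder : ∀ x : ℝ, HasDerivAt (P (m + 1)) (Pd x) x := by
      intro x; rw [hPfun]; exact poly_hasDerivAt c x
    have hderivP : deriv (P (m + 1)) = Pd := funext fun x => (hPder x).deriv
    have hPdc : Continuous Pd := by
      apply continuous_finset_sum
      intro i _
      exact (continuous_const.mul (continuous_pow _)).smul continuous_const
    -- FTC for P (m+1)
    have hPftc : ∫ s in a..b, Pd s = P (m + 1) b - P (m + 1) a := by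
      apply intervalIntegral.integral_eq_sub_of_hasDerivAt
      · intro x _; exact hPder x
      · exact hPdc.intervalIntegrable a b
    -- FTC for v
    have hvftc : ∫ s in a..b, derivWithin v (Icc (0 : ℝ) T) s = v b - v a := by
      apply intervalIntegral.integral_eq_sub_of_hasDeriv_right_of_le hab
      · exact hv.continuousOn.mono hsub
      · intro x hx
        have hxI : x ∈ Icc (0 : ℝ) T := hsub ⟨le_of_lt hx.1, le_of_lt hx.2⟩
        have hd : HasDerivWithinAt v (derivWithin v (Icc (0 : ℝ) T) x) (Icc (0 : ℝ) T) x :=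
          (hv.differentiableOn one_ne_zero x hxI).hasDerivWithinAt
        apply hd.mono_of_mem_nhdsWithin
        apply Icc_mem_nhdsGT_of_mem
        exact ⟨hxI.1, lt_of_lt_of_le hx.2 hbI.2⟩
      · exact (hvd.mono hsub).intervalIntegrable_of_Icc hab
    -- integrabilities
    have hvint : IntervalIntegrable (derivWithin v (Icc (0 : ℝ) T)) volume a b :=
      (hvd.mono hsub).intervalIntegrable_of_Icc hab
    have hPint : IntervalIntegrable Pd volume a b := hPdc.intervalIntegrable a b
    have hgint : IntervalIntegrable
        (fun s => derivWithin v (Icc (0 : ℝ) T) s - Pd s) volume a b := hvint.sub hPint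
    -- orthogonality against constants gives vanishing of the vector integral
    have hkey : (∫ s in a..b, (derivWithin v (Icc (0 : ℝ) T) s - Pd s)) = 0 := by
      rw [intervalIntegral.integral_of_le hab]
      apply integral_eq_zero_of_forall_integral_inner_eq_zero ℝ _ hgint.1
      intro e
      have hw : IsPolyDegLT H q (fun _ => e) := by
        refine ⟨fun i => if i = (⟨0, hq⟩ : Fin q) then e else 0, fun s => ?_⟩
        rw [Finset.sum_eq_single (⟨0, hq⟩ : Fin q)]
        · simp
        · intro i _ hi; simp [hi]
        · simp
      have h0 := horth (m + 1) hmem (fun _ => e) hw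
      simp only [Nat.add_sub_cancel] at h0
      rw [← ha, ← hb, hderivP, intervalIntegral.integral_of_le hab] at h0
      have hcomm : ∀ s : ℝ, ⟪e, derivWithin v (Icc (0 : ℝ) T) s - Pd s⟫
          = ⟪derivWithin v (Icc (0 : ℝ) T) s - Pd s, e⟫ := fun s => real_inner_comm _ _
      simp_rw [hcomm]
      exact h0
    rw [intervalIntegral.integral_sub hvint hPint, hvftc, hPftc, sub_eq_zero] at hkey
    -- conclude
    have hpa : p a = P (m + 1) a := hagree (m + 1) hmem a (by simp [ha, Nat.add_sub_cancel, hab, le_of_lt (hmono m hmN)])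
    have hpb : p b = P (m + 1) b := hagree (m + 1) hmem b (by simp [hb, Nat.add_sub_cancel, hab, le_of_lt (hmono m hmN)])
    have ihm : p a = v a := ih (le_of_lt hmN)
    have h2 : P (m + 1) a = v a := hpa.symm.trans ihm
    rw [← h2, sub_left_inj] at hkey
    rw [hpb, ← hkey]
end
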